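/- arXiv:2010.12846 — 2 statements merged into one kernel-verified Lean document; each statement's English description precedes it below -/
import Mathlib

section
/- Let n ≥ 1 and let ζ : ℝ → (0,∞) be continuous and strictly decreasing with ∫₀^∞ ζ(t) dt < ∞. Then δ_ζ^H(u,v) = ∫₀^∞ d̂_H({x : ζ(u(x)) ≥ s}, {x : ζ(v(x)) ≥ s}) ds defines a finite metric on Conv_c(ℝⁿ). -/
open MeasureTheory Filter Topology Set
open scoped Classical ENNReal

noncomputable section

abbrev En (n : ℕ) := EuclideanSpace ℝ (Fin n)

/-- `ζ` applied to an extended real value, with the convention `ζ (+∞) = 0`. -/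
def zeval (ζ : ℝ → ℝ) (t : EReal) : ℝ := if t = ⊤ then 0 else ζ t.toReal

/-- The epigraph of an extended-real-valued function. -/
def epiSet {n : ℕ} (u : En n → EReal) : Set (En n × ℝ) := {p | u p.1 ≤ (p.2 : EReal)}

/-- `Conv_c(ℝⁿ)`: proper, lower semicontinuous, convex, coercive functions with
values in `ℝ ∪ {+∞}`. -/
def ConvC (n : ℕ) (u : En n → EReal) : Prop :=
  (∀ x, u x ≠ ⊥) ∧ (∃ x, u x ≠ ⊤) ∧ LowerSemicontinuous u ∧
    Convex ℝ (epiSet u) ∧ Tendsto u (cocompact (En n)) (𝓝 ⊤)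

/-- `Conv_c^{(n)}(ℝⁿ)`: members of `Conv_c(ℝⁿ)` with full-dimensional domain. -/
def ConvCd (n : ℕ) (u : En n → EReal) : Prop :=
  ConvC n u ∧ (interior {x | u x ≠ ⊤}).Nonempty

/-- Epi-convergence of a sequence of extended-real-valued functions. -/
def EpiTendsto {n : ℕ} (u : ℕ → En n → EReal) (v : En n → EReal) : Prop :=
  ∀ x : En n,
    (∀ y : ℕ → En n, Tendsto y atTop (𝓝 x) →
      v x ≤ Filter.liminf (fun k => u k (y k)) atTop) ∧
    (∃ y : ℕ → En n, Tendsto y atTop (𝓝 x) ∧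
      Filter.limsup (fun k => u k (y k)) atTop ≤ v x)

/-- Super-coercivity: `u x / ‖x‖ → +∞` as `‖x‖ → ∞`. -/
def SuperCoercive {n : ℕ} (u : En n → EReal) : Prop :=
  ∀ M : ℝ, ∀ᶠ x in cocompact (En n), ((M * ‖x‖ : ℝ) : EReal) ≤ u x

/-- The functional `δ_{ζ,p}`. -/
def deltaZP {n : ℕ} (ζ : ℝ → ℝ) (p : ℝ) (u v : En n → EReal) : ℝ :=
  (∫ x : En n, |zeval ζ (u x) - zeval ζ (v x)| ^ p) ^ (1 / p)

/-- The functional `δ_{ζ,1} = δ_ζ`. -/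
def delta1 {n : ℕ} (ζ : ℝ → ℝ) (u v : En n → EReal) : ℝ :=
  ∫ x : En n, |zeval ζ (u x) - zeval ζ (v x)|

/-- `f` applied to an extended real value with the convention `f (+∞) = +∞`. -/
def emap (f : ℝ → ℝ) (t : EReal) : EReal := if t = ⊤ then ⊤ else ((f t.toReal : ℝ) : EReal)

/-- The (convex) indicator function `I^∞_K + t`. -/
def indE {n : ℕ} (K : Set (En n)) (t : ℝ) : En n → EReal :=
  fun x => if x ∈ K then (t : EReal) else ⊤

/-- Nondegenerate parallelotope: Minkowski sum of `n` linearly independent segments. -/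
def IsParallelotope {n : ℕ} (P : Set (En n)) : Prop :=
  ∃ (z : En n) (b : Fin n → En n), LinearIndependent ℝ b ∧
    P = (fun c : Fin n → ℝ => z + ∑ i, c i • b i) '' (Set.univ.pi fun _ => Set.Icc (0:ℝ) 1)

/-- Convex body with nonempty interior. -/
def IsConvexBodyI {n : ℕ} (K : Set (En n)) : Prop :=
  IsCompact K ∧ Convex ℝ K ∧ (interior K).Nonempty

/-- Convex body: nonempty compact convex set. -/
def IsCB {n : ℕ} (K : Set (En n)) : Prop := K.Nonempty ∧ IsCompact K ∧ Convex ℝ K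

/-- The extension `d̂_H` of the Hausdorff metric to `K(ℝⁿ) ∪ {∅}`. -/
def dhatH {n : ℕ} (K L : Set (En n)) : ℝ :=
  if K = ∅ then (if L = ∅ then 0 else max 1 (Metric.hausdorffDist L {0}))
  else if L = ∅ then max 1 (Metric.hausdorffDist K {0})
  else Metric.hausdorffDist K L

/-- The functional `δ_ζ^H`. -/
def deltaH {n : ℕ} (ζ : ℝ → ℝ) (u v : En n → EReal) : ℝ :=
  ∫ s in Set.Ioi (0:ℝ), dhatH {x | s ≤ zeval ζ (u x)} {x | s ≤ zeval ζ (v x)}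

/-- The Legendre–Fenchel conjugate. -/
def conjF {n : ℕ} (u : En n → EReal) : En n → EReal :=
  fun y => ⨆ x : En n, (((inner ℝ x y : ℝ) : EReal) - u x)

/-- The admissible set in the definition of the Hausdorff-type metric `δ` of Section 5.2:
`λ > 0` such that `‖u^* - v^*‖_{∞, (1/λ)Bⁿ} ≤ λ`. -/
def DSet {n : ℕ} (u v : En n → EReal) : Set ℝ :=
  {l : ℝ | 0 < l ∧ ∀ x : En n, ‖x‖ ≤ 1 / l →
    conjF u x ≤ conjF v x + (l : EReal) ∧ conjF v x ≤ conjF u x + (l : EReal)}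

/-- The Hausdorff-type metric `δ` of Section 5.2. -/
def deltaStar {n : ℕ} (u v : En n → EReal) : ℝ := sInf (DSet u v)

namespace S16

open EMetric Bornology

/-- Bundle of hypotheses on the weight. -/
structure Zeta (ζ : ℝ → ℝ) : Prop where
  pos : ∀ t, 0 < ζ t
  cont : Continuous ζ
  anti : StrictAnti ζ
  mom : IntegrableOn ζ (Set.Ioi (0:ℝ))

variable {n : ℕ}

lemma zeval_coe (ζ : ℝ → ℝ) (r : ℝ) : zeval ζ ((r : ℝ) : EReal) = ζ r := by
  simp [zeval]

lemma zeval_top (ζ : ℝ → ℝ) : zeval ζ (⊤ : EReal) = 0 := by simp [zeval]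

lemma zeval_nonneg {ζ : ℝ → ℝ} (hζ : Zeta ζ) (t : EReal) : 0 ≤ zeval ζ t := by
  unfold zeval; split_ifs
  · exact le_refl 0
  · exact (hζ.pos _).le

/-- Upper sets in `ℝ` are measurable. -/
lemma measurableSet_of_upper {S : Set ℝ} (h : ∀ a ∈ S, ∀ b, a ≤ b → b ∈ S) :
    MeasurableSet S := by
  rcases S.eq_empty_or_nonempty with rfl | hne
  · exact MeasurableSet.empty
  by_cases hb : BddBelow S
  · have h1 : Ioi (sInf S) ⊆ S := by
      intro x hx
      obtain ⟨a, ha, hax⟩ := exists_lt_of_csInf_lt hne hx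
      exact h a ha x hax.le
    have h2 : S ⊆ Ici (sInf S) := fun x hx => csInf_le hb hx
    have hS : S = Ioi (sInf S) ∪ (S ∩ {sInf S}) := by
      ext x
      constructor
      · intro hx
        rcases eq_or_lt_of_le (mem_Ici.1 (h2 hx)) with he | hlt
        · exact Or.inr ⟨hx, by simpa using he.symm⟩
        · exact Or.inl hlt
      · rintro (hx | ⟨hx, -⟩)
        · exact h1 hx
        · exact hx
    rw [hS]
    exact measurableSet_Ioi.union
      (((Set.countable_singleton _).mono inter_subset_right).measurableSet)
  · have hS : S = univ := by
      ext x
      simp only [mem_univ, iff_true]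
      rw [not_bddBelow_iff] at hb
      obtain ⟨a, ha, hax⟩ := hb x
      exact h a ha x hax.le
    rw [hS]; exact MeasurableSet.univ

/-- Lower sets in `ℝ` are measurable. -/
lemma measurableSet_of_lower {S : Set ℝ} (h : ∀ a ∈ S, ∀ b, b ≤ a → b ∈ S) :
    MeasurableSet S := by
  have : MeasurableSet (Neg.neg ⁻¹' S : Set ℝ) := by
    apply measurableSet_of_upper
    intro a ha b hab
    exact h (-a) ha (-b) (by linarith)
  have hS : S = Neg.neg ⁻¹' (Neg.neg ⁻¹' S : Set ℝ) := by ext x; simp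
  rw [hS]
  exact measurable_neg this

/-- Linear growth of a proper lsc convex coercive function. -/
lemma growth {u : En n → EReal} (hu : ConvC n u) :
    ∃ (x₀ : En n) (c R : ℝ), 0 < R ∧ u x₀ = (c : EReal) ∧
      ∀ x : En n, R ≤ ‖x - x₀‖ → ((c + ‖x - x₀‖ / R : ℝ) : EReal) ≤ u x := by
  obtain ⟨hbot, ⟨x₀, hx₀⟩, hlsc, hconv, hcoer⟩ := hu
  set c := (u x₀).toReal with hc
  have hux₀ : u x₀ = (c : EReal) := (EReal.coe_toReal hx₀ (hbot x₀)).symm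
  have hev : ∀ᶠ x in cocompact (En n), ((c + 1 : ℝ) : EReal) < u x :=
    hcoer.eventually (eventually_mem_set.2 (Ioi_mem_nhds (EReal.coe_lt_top (c+1))))
  obtain ⟨C, hCcomp, hC⟩ := (Filter.hasBasis_cocompact.eventually_iff).mp hev
  obtain ⟨R₀, hR₀, hCsub⟩ := hCcomp.isBounded.subset_closedBall_lt 0 x₀
  refine ⟨x₀, c, R₀ + 1, by linarith, hux₀, ?_⟩
  intro x hx
  set d := ‖x - x₀‖ with hd
  have hdpos : 0 < d := lt_of_lt_of_le (by linarith) hx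
  set lam := (R₀ + 1) / d with hlam
  have hlam0 : 0 < lam := by positivity
  set y := x₀ + lam • (x - x₀) with hy
  have hyn : ‖y - x₀‖ = R₀ + 1 := by
    rw [hy, add_sub_cancel_left, norm_smul, Real.norm_of_nonneg hlam0.le, hlam]
    field_simp
    exact hd.symm
  have hyC : y ∉ C := by
    intro hyc
    have := hCsub hyc
    rw [Metric.mem_closedBall, dist_eq_norm, hyn] at this
    linarith
  have hylt : ((c + 1 : ℝ) : EReal) < u y := hC hyC
  by_cases hxt : u x = ⊤
  · rw [hxt]; exact le_top
  · set m := (u x).toReal with hm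
    have hux : u x = (m : EReal) := (EReal.coe_toReal hxt (hbot x)).symm
    have h₁ : ((x₀, c) : En n × ℝ) ∈ epiSet u := by
      simp only [epiSet, mem_setOf_eq, hux₀]; exact le_refl _
    have h₂ : ((x, m) : En n × ℝ) ∈ epiSet u := by
      simp only [epiSet, mem_setOf_eq, hux]; exact le_refl _
    have hcomb := hconv h₁ h₂ (a := 1 - lam) (b := lam)
      (by rw [hlam]; rw [sub_nonneg, div_le_one hdpos]; exact hx) hlam0.le (by ring)
    simp only [Prod.smul_mk, Prod.mk_add_mk, smul_eq_mul, epiSet, mem_setOf_eq] at hcomb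
    have hfst : (1 - lam) • x₀ + lam • x = y := by
      rw [hy]; module
    rw [hfst] at hcomb
    have hlt : (c + 1 : ℝ) < (1 - lam) * c + lam * m :=
      EReal.coe_lt_coe_iff.1 (lt_of_lt_of_le hylt hcomb)
    have h1 : 1 < lam * (m - c) := by nlinarith
    have h2 : lam * (d / (R₀ + 1)) = 1 := by
      rw [hlam]; field_simp
    have h3 : d / (R₀ + 1) < m - c := by
      have h4 : lam * (d / (R₀ + 1)) < lam * (m - c) := by rw [h2]; exact h1
      exact lt_of_mul_lt_mul_left h4 hlam0.le
    rw [hux, EReal.coe_le_coe_iff]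
    linarith


/-- Sublevel sets are contained in balls whose radius is affine in the level. -/
lemma sublevel_ball {u : En n → EReal} (hu : ConvC n u) :
    ∃ c₁ c₂ : ℝ, 0 ≤ c₁ ∧ 0 < c₂ ∧
      ∀ (t : ℝ) (x : En n), u x ≤ (t : EReal) → ‖x‖ ≤ c₁ + c₂ * max t 0 := by
  obtain ⟨x₀, c, R, hR, hux₀, hgr⟩ := growth hu
  refine ⟨‖x₀‖ + R + R * |c|, R, by positivity, hR, ?_⟩
  intro t x hx
  have hnx : ‖x‖ ≤ ‖x₀‖ + ‖x - x₀‖ := by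
    calc ‖x‖ = ‖x₀ + (x - x₀)‖ := by rw [add_sub_cancel]
    _ ≤ ‖x₀‖ + ‖x - x₀‖ := norm_add_le _ _
  have hmax0 : (0:ℝ) ≤ max t 0 := le_max_right _ _
  by_cases hd : ‖x - x₀‖ ≤ R
  · nlinarith [abs_nonneg c, mul_nonneg hR.le hmax0]
  · push_neg at hd
    have h := le_trans (hgr x hd.le) hx
    rw [EReal.coe_le_coe_iff] at h
    have h2 : ‖x - x₀‖ / R ≤ t - c := by linarith
    have h3 : ‖x - x₀‖ ≤ R * (t - c) := by
      rw [div_le_iff₀ hR] at h2; linarith [h2]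
    have h4 : t - c ≤ max t 0 + |c| := by
      have := le_max_left t 0
      have := neg_abs_le c
      linarith
    nlinarith [mul_le_mul_of_nonneg_left h4 hR.le]

/-- A function in `ConvC` is bounded below by a real constant. -/
lemma convc_bddBelow {u : En n → EReal} (hu : ConvC n u) :
    ∃ m : ℝ, ∀ x, (m : EReal) ≤ u x := by
  obtain ⟨c₁, c₂, hc₁, hc₂, hball⟩ := sublevel_ball hu
  obtain ⟨x₀, hx₀⟩ := hu.2.1
  set c := (u x₀).toReal with hc
  set S : ℕ → Set (En n) := fun k => {x | u x ≤ ((c - k : ℝ) : EReal)} with hS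
  by_cases hall : ∀ k, (S k).Nonempty
  · exfalso
    have hdec : ∀ k, S (k+1) ⊆ S k := by
      intro k x hx
      refine le_trans hx (EReal.coe_le_coe_iff.2 ?_)
      push_cast; linarith
    have hcl : ∀ k, IsClosed (S k) := fun k => hu.2.2.1.isClosed_preimage _
    have hbd : ∀ k, IsBounded (S k) := by
      intro k
      exact (Metric.isBounded_closedBall (x := (0 : En n))
          (r := c₁ + c₂ * max (c - k) 0)).subset
        (fun x hx => mem_closedBall_zero_iff.2 (hball _ x hx))
    have hcomp0 : IsCompact (S 0) :=
      Metric.isCompact_of_isClosed_isBounded (hcl 0) (hbd 0)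
    obtain ⟨z, hz⟩ := IsCompact.nonempty_iInter_of_sequence_nonempty_isCompact_isClosed
      S hdec hall hcomp0 hcl
    have hz' : ∀ k : ℕ, u z ≤ ((c - k : ℝ) : EReal) := fun k => (mem_iInter.1 hz k : _)
    have hzt : u z ≠ ⊤ := by
      intro h
      have := hz' 0
      rw [h] at this
      simp at this
    set r := (u z).toReal with hr
    have huz : u z = (r : EReal) := (EReal.coe_toReal hzt (hu.1 z)).symm
    have hk := hz' (⌈c - r⌉₊ + 1)
    rw [huz, EReal.coe_le_coe_iff] at hk
    have hceil := Nat.le_ceil (c - r)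
    push_cast at hk
    linarith
  · push_neg at hall
    obtain ⟨k, hk⟩ := hall
    refine ⟨c - k, fun x => ?_⟩
    have hx : x ∉ S k := by rw [hk]; exact notMem_empty x
    exact (not_le.1 hx).le


lemma zeta_tendsto {ζ : ℝ → ℝ} (hζ : Zeta ζ) : Tendsto ζ atTop (𝓝 0) := by
  have hbdd : BddBelow (range ζ) := ⟨0, by rintro _ ⟨t, rfl⟩; exact (hζ.pos t).le⟩
  have htend := tendsto_atTop_ciInf hζ.anti.antitone hbdd
  have hc0 : 0 ≤ ⨅ t, ζ t := le_ciInf fun t => (hζ.pos t).le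
  rcases eq_or_lt_of_le hc0 with he | hlt
  · rwa [← he] at htend
  · exfalso
    set c := ⨅ t, ζ t with hcc
    have hge : ∀ t, c ≤ ζ t := fun t => ciInf_le hbdd t
    have hci : IntegrableOn (fun _ : ℝ => c) (Set.Ioi (0:ℝ)) := by
      apply hζ.mom.mono' aestronglyMeasurable_const
      filter_upwards with t
      rw [Real.norm_of_nonneg hc0]
      exact hge t
    rcases integrable_const_iff.mp hci with h | h
    · exact hlt.ne' h
    · have h := h.measure_univ_lt_top; rw [Measure.restrict_apply_univ, Real.volume_Ioi] at h
      exact (lt_irrefl _ h)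

section Alev

variable (ζ : ℝ → ℝ)

def Alev (s : ℝ) : Set ℝ := {t | s ≤ ζ t}

def Tlev (s : ℝ) : ℝ := sSup (Alev ζ s)

def Kset (u : En n → EReal) (s : ℝ) : Set (En n) := {x | s ≤ zeval ζ (u x)}

def Gfun (s : ℝ) : ℝ≥0∞ := volume (Ioi (0:ℝ) ∩ Alev ζ s)

end Alev

variable {ζ : ℝ → ℝ}

lemma Alev_closed (hζ : Zeta ζ) (s : ℝ) : IsClosed (Alev ζ s) :=
  isClosed_le continuous_const hζ.cont

lemma Alev_bddAbove (hζ : Zeta ζ) {s : ℝ} (hs : 0 < s) : BddAbove (Alev ζ s) := by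
  have hev := (zeta_tendsto hζ).eventually (eventually_mem_set.2 (Iio_mem_nhds hs))
  rw [eventually_atTop] at hev
  obtain ⟨T, hT⟩ := hev
  refine ⟨T, fun t ht => ?_⟩
  by_contra h
  push_neg at h
  have h2 : ζ t < s := hT t h.le
  have h3 : s ≤ ζ t := ht
  linarith

lemma Tlev_mem (hζ : Zeta ζ) {s : ℝ} (hs : 0 < s) (hne : (Alev ζ s).Nonempty) :
    Tlev ζ s ∈ Alev ζ s :=
  (Alev_closed hζ s).csSup_mem hne (Alev_bddAbove hζ hs)

lemma Alev_eq_Iic (hζ : Zeta ζ) {s : ℝ} (hs : 0 < s) (hne : (Alev ζ s).Nonempty) :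
    Alev ζ s = Iic (Tlev ζ s) := by
  ext t
  constructor
  · intro ht; exact le_csSup (Alev_bddAbove hζ hs) ht
  · intro ht
    have h1 : s ≤ ζ (Tlev ζ s) := Tlev_mem hζ hs hne
    exact le_trans h1 (hζ.anti.antitone ht)

lemma Kset_anti (u : En n → EReal) : Antitone (Kset ζ u) :=
  fun _ _ hab _ hx => le_trans hab hx

lemma mem_Kset_iff (hζ : Zeta ζ) {u : En n → EReal} (hbot : ∀ x, u x ≠ ⊥) {s : ℝ}
    (hs : 0 < s) (hne : (Alev ζ s).Nonempty) {x : En n} :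
    x ∈ Kset ζ u s ↔ u x ≤ ((Tlev ζ s : ℝ) : EReal) := by
  constructor
  · intro hx
    by_cases ht : u x = ⊤
    · exfalso
      have h1 : s ≤ zeval ζ (u x) := hx
      rw [ht, zeval_top] at h1
      linarith
    · have hco : u x = ((u x).toReal : EReal) := (EReal.coe_toReal ht (hbot x)).symm
      have h1 : s ≤ zeval ζ (u x) := hx
      rw [hco, zeval_coe] at h1
      rw [hco]
      exact EReal.coe_le_coe_iff.2 (le_csSup (Alev_bddAbove hζ hs) h1)
  · intro hx
    have ht : u x ≠ ⊤ := by
      intro h; rw [h] at hx; simp at hx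
    have hco : u x = ((u x).toReal : EReal) := (EReal.coe_toReal ht (hbot x)).symm
    rw [hco, EReal.coe_le_coe_iff] at hx
    show s ≤ zeval ζ (u x)
    rw [hco, zeval_coe]
    exact le_trans (Tlev_mem hζ hs hne) (hζ.anti.antitone hx)

lemma Kset_eq_empty (hζ : Zeta ζ) {u : En n → EReal} (hbot : ∀ x, u x ≠ ⊥) {s : ℝ}
    (hs : 0 < s) (hA : ¬ (Alev ζ s).Nonempty) : Kset ζ u s = ∅ := by
  rw [eq_empty_iff_forall_notMem]
  intro x hx
  by_cases ht : u x = ⊤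
  · have h1 : s ≤ zeval ζ (u x) := hx
    rw [ht, zeval_top] at h1
    linarith
  · have hco : u x = ((u x).toReal : EReal) := (EReal.coe_toReal ht (hbot x)).symm
    have h1 : s ≤ zeval ζ (u x) := hx
    rw [hco, zeval_coe] at h1
    exact hA ⟨_, h1⟩

lemma Kset_closed (hζ : Zeta ζ) {u : En n → EReal} (hbot : ∀ x, u x ≠ ⊥)
    (hlsc : LowerSemicontinuous u) {s : ℝ} (hs : 0 < s) : IsClosed (Kset ζ u s) := by
  by_cases hne : (Alev ζ s).Nonempty
  · have he : Kset ζ u s = u ⁻¹' Iic ((Tlev ζ s : ℝ) : EReal) :=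
      Set.ext fun x => mem_Kset_iff hζ hbot hs hne
    rw [he]
    exact hlsc.isClosed_preimage _
  · rw [Kset_eq_empty hζ hbot hs hne]
    exact isClosed_empty

lemma Kset_norm_le (hζ : Zeta ζ) {u : En n → EReal} (hbot : ∀ x, u x ≠ ⊥) {c₁ c₂ : ℝ}
    (hball : ∀ (t : ℝ) (x : En n), u x ≤ (t : EReal) → ‖x‖ ≤ c₁ + c₂ * max t 0)
    {s : ℝ} (hs : 0 < s) :
    ∀ x ∈ Kset ζ u s, ‖x‖ ≤ c₁ + c₂ * max (Tlev ζ s) 0 := by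
  intro x hx
  by_cases hne : (Alev ζ s).Nonempty
  · exact hball _ x ((mem_Kset_iff hζ hbot hs hne).1 hx)
  · rw [Kset_eq_empty hζ hbot hs hne] at hx
    exact absurd hx (notMem_empty x)

lemma Kset_bounded (hζ : Zeta ζ) {u : En n → EReal} (hu : ConvC n u) {s : ℝ} (hs : 0 < s) :
    IsBounded (Kset ζ u s) := by
  obtain ⟨c₁, c₂, _, _, hball⟩ := sublevel_ball hu
  exact (Metric.isBounded_closedBall (x := (0:En n)) (r := c₁ + c₂ * max (Tlev ζ s) 0)).subset
    (fun x hx => mem_closedBall_zero_iff.2 (Kset_norm_le hζ hu.1 hball hs x hx))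

lemma Kset_empty_of_lt (hζ : Zeta ζ) {u : En n → EReal} (hbot : ∀ x, u x ≠ ⊥) {m : ℝ}
    (hm : ∀ x, (m : EReal) ≤ u x) {s : ℝ} (hsm : ζ m < s) : Kset ζ u s = ∅ := by
  have hs : 0 < s := lt_trans (hζ.pos m) hsm
  rw [eq_empty_iff_forall_notMem]
  intro x hx
  by_cases ht : u x = ⊤
  · have h1 : s ≤ zeval ζ (u x) := hx
    rw [ht, zeval_top] at h1
    linarith
  · have hco : u x = ((u x).toReal : EReal) := (EReal.coe_toReal ht (hbot x)).symm
    have h1 : s ≤ zeval ζ (u x) := hx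
    rw [hco, zeval_coe] at h1
    have h2 : m ≤ (u x).toReal := by
      have := hm x
      rw [hco, EReal.coe_le_coe_iff] at this
      exact this
    have := hζ.anti.antitone h2
    linarith


lemma Gfun_anti : Antitone (Gfun ζ) := by
  intro a b hab
  apply measure_mono
  exact inter_subset_inter_right _ (fun t ht => le_trans hab ht)

lemma Gfun_measurable : Measurable (Gfun ζ) := Gfun_anti.measurable

lemma Gfun_toReal (hζ : Zeta ζ) {s : ℝ} (hs : 0 < s) (hne : (Alev ζ s).Nonempty) :
    (Gfun ζ s).toReal = max (Tlev ζ s) 0 := by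
  unfold Gfun
  rw [Alev_eq_Iic hζ hs hne, Ioi_inter_Iic, Real.volume_Ioc, ENNReal.toReal_ofReal',
    sub_zero]

lemma Gfun_lt_top (hζ : Zeta ζ) {s : ℝ} (hs : 0 < s) : Gfun ζ s < ⊤ := by
  obtain ⟨T, hT⟩ := Alev_bddAbove hζ hs
  have : Ioi (0:ℝ) ∩ Alev ζ s ⊆ Ioc 0 T := by
    intro t ht
    exact ⟨ht.1, hT ht.2⟩
  calc Gfun ζ s ≤ volume (Ioc (0:ℝ) T) := measure_mono this
  _ < ⊤ := by rw [Real.volume_Ioc]; exact ENNReal.ofReal_lt_top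

lemma Gfun_lintegral (hζ : Zeta ζ) : ∫⁻ s in Ioi (0:ℝ), Gfun ζ s < ⊤ := by
  set c : ℝ → ℝ → ℝ≥0∞ := fun s t => Set.indicator {t' : ℝ | s ≤ ζ t'} 1 t with hc
  have hmeasset : MeasurableSet {p : ℝ × ℝ | p.1 ≤ ζ p.2} :=
    measurableSet_le measurable_fst (hζ.cont.measurable.comp measurable_snd)
  have huncurry : Function.uncurry c = Set.indicator {p : ℝ × ℝ | p.1 ≤ ζ p.2} 1 := by
    funext p
    by_cases hp : p.1 ≤ ζ p.2 <;>
      simp [hc, Function.uncurry, Set.indicator, hp]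
  have hmeas : Measurable (Function.uncurry c) := by
    rw [huncurry]
    exact measurable_const.indicator hmeasset
  have h1 : ∀ s : ℝ, Gfun ζ s = ∫⁻ t in Ioi (0:ℝ), c s t := by
    intro s
    rw [hc]
    have hA : MeasurableSet {t' : ℝ | s ≤ ζ t'} :=
      (isClosed_le continuous_const hζ.cont).measurableSet
    rw [lintegral_indicator_one hA, Measure.restrict_apply hA]
    unfold Gfun
    rw [inter_comm]
    rfl
  have h2 : ∀ t : ℝ, (∫⁻ s in Ioi (0:ℝ), c s t) = ENNReal.ofReal (ζ t) := by
    intro t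
    have : (fun s => c s t) = Set.indicator {s : ℝ | s ≤ ζ t} 1 := by
      funext s
      by_cases hst : s ≤ ζ t <;> simp [hc, Set.indicator, hst]
    rw [this]
    have hB : MeasurableSet {s : ℝ | s ≤ ζ t} := measurableSet_Iic
    rw [lintegral_indicator_one hB, Measure.restrict_apply hB]
    have : {s : ℝ | s ≤ ζ t} ∩ Ioi 0 = Ioc 0 (ζ t) := by
      ext s
      simp only [mem_inter_iff, mem_setOf_eq, mem_Ioi, mem_Ioc]
      tauto
    rw [this, Real.volume_Ioc, sub_zero]
  calc ∫⁻ s in Ioi (0:ℝ), Gfun ζ s = ∫⁻ s in Ioi (0:ℝ), ∫⁻ t in Ioi (0:ℝ), c s t := by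
        apply lintegral_congr
        exact h1
  _ = ∫⁻ t in Ioi (0:ℝ), ∫⁻ s in Ioi (0:ℝ), c s t := lintegral_lintegral_swap hmeas.aemeasurable
  _ = ∫⁻ t in Ioi (0:ℝ), ENNReal.ofReal (ζ t) := by
        apply lintegral_congr
        exact h2
  _ < ⊤ := by
        have hfin := hζ.mom.2
        rw [hasFiniteIntegral_iff_norm] at hfin
        have : ∀ t : ℝ, ENNReal.ofReal (ζ t) = ENNReal.ofReal ‖ζ t‖ := by
          intro t
          rw [Real.norm_of_nonneg (hζ.pos t).le]
        calc ∫⁻ t in Ioi (0:ℝ), ENNReal.ofReal (ζ t)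
            = ∫⁻ t in Ioi (0:ℝ), ENNReal.ofReal ‖ζ t‖ := lintegral_congr this
        _ < ⊤ := hfin


lemma dhat_nonneg (K L : Set (En n)) : 0 ≤ dhatH K L := by
  unfold dhatH
  split_ifs
  · exact le_refl 0
  · exact le_trans zero_le_one (le_max_left _ _)
  · exact le_trans zero_le_one (le_max_left _ _)
  · exact Metric.hausdorffDist_nonneg

lemma dhat_comm (K L : Set (En n)) : dhatH K L = dhatH L K := by
  unfold dhatH
  by_cases h1 : K = ∅ <;> by_cases h2 : L = ∅
  · rw [if_pos h1, if_pos h2, if_pos h2, if_pos h1]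
  · rw [if_pos h1, if_neg h2, if_neg h2, if_pos h1]
  · rw [if_neg h1, if_pos h2, if_pos h2, if_neg h1]
  · rw [if_neg h1, if_neg h2, if_neg h2, if_neg h1, Metric.hausdorffDist_comm]

lemma dhat_self (K : Set (En n)) : dhatH K K = 0 := by
  unfold dhatH
  split_ifs
  · rfl
  · exact Metric.hausdorffDist_self_zero

lemma dist_le_two_radius {K L : Set (En n)} {ρ : ℝ} (hρ : 0 ≤ ρ)
    (hK : ∀ x ∈ K, ‖x‖ ≤ ρ) (hL : ∀ x ∈ L, ‖x‖ ≤ ρ)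
    (hKne : K ≠ ∅) (hLne : L ≠ ∅) : Metric.hausdorffDist K L ≤ 2 * ρ := by
  obtain ⟨x₀, hx₀⟩ := nonempty_iff_ne_empty.2 hKne
  obtain ⟨y₀, hy₀⟩ := nonempty_iff_ne_empty.2 hLne
  apply Metric.hausdorffDist_le_of_mem_dist (by linarith)
  · intro x hx
    refine ⟨y₀, hy₀, ?_⟩
    calc dist x y₀ ≤ ‖x‖ + ‖y₀‖ := dist_le_norm_add_norm x y₀
    _ ≤ 2 * ρ := by linarith [hK x hx, hL y₀ hy₀]
  · intro y hy
    refine ⟨x₀, hx₀, ?_⟩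
    calc dist y x₀ ≤ ‖y‖ + ‖x₀‖ := dist_le_norm_add_norm y x₀
    _ ≤ 2 * ρ := by linarith [hL y hy, hK x₀ hx₀]

lemma dist_zero_le_radius {L : Set (En n)} {ρ : ℝ} (hρ : 0 ≤ ρ)
    (hL : ∀ x ∈ L, ‖x‖ ≤ ρ) (hLne : L ≠ ∅) :
    Metric.hausdorffDist L {(0 : En n)} ≤ ρ := by
  obtain ⟨y₀, hy₀⟩ := nonempty_iff_ne_empty.2 hLne
  apply Metric.hausdorffDist_le_of_mem_dist hρ
  · intro x hx
    refine ⟨0, mem_singleton 0, ?_⟩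
    rw [dist_zero_right]
    exact hL x hx
  · intro y hy
    refine ⟨y₀, hy₀, ?_⟩
    rw [mem_singleton_iff] at hy
    rw [hy, dist_comm, dist_zero_right]
    exact hL y₀ hy₀

lemma dhat_le_ball {K L : Set (En n)} {ρ : ℝ} (hρ : 0 ≤ ρ)
    (hK : ∀ x ∈ K, ‖x‖ ≤ ρ) (hL : ∀ x ∈ L, ‖x‖ ≤ ρ) : dhatH K L ≤ 1 + 2 * ρ := by
  unfold dhatH
  split_ifs with h1 h2 h3
  · linarith
  · exact max_le (by linarith) (by linarith [dist_zero_le_radius hρ hL h2])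
  · exact max_le (by linarith) (by linarith [dist_zero_le_radius hρ hK h1])
  · linarith [dist_le_two_radius hρ hK hL h1 h3]

lemma dhat_triangle {K L M : Set (En n)} (hKb : IsBounded K) (hLb : IsBounded L)
    (hMb : IsBounded M) : dhatH K M ≤ dhatH K L + dhatH L M := by
  have hz : ({(0 : En n)} : Set (En n)).Nonempty := singleton_nonempty 0
  have hzb : IsBounded ({(0 : En n)} : Set (En n)) := isBounded_singleton
  by_cases h1 : K = ∅ <;> by_cases h2 : L = ∅ <;> by_cases h3 : M = ∅
  · simp only [dhatH, if_pos h1, if_pos h2, if_pos h3]; norm_num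
  · simp only [dhatH, if_pos h1, if_pos h2, if_neg h3]; norm_num
  · simp only [dhatH, if_pos h1, if_neg h2, if_pos h3]
    have := Metric.hausdorffDist_nonneg (s := L) (t := {(0:En n)})
    have := Metric.hausdorffDist_nonneg (s := L) (t := M)
    have h4 : (0:ℝ) ≤ max 1 (Metric.hausdorffDist L {(0:En n)}) :=
      le_trans zero_le_one (le_max_left _ _)
    linarith
  · -- K = ∅, L ≠ ∅, M ≠ ∅
    simp only [dhatH, if_pos h1, if_neg h2, if_neg h3]
    have hLn := nonempty_iff_ne_empty.2 h2
    have hMn := nonempty_iff_ne_empty.2 h3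
    have fin1 : EMetric.hausdorffEdist M L ≠ ⊤ :=
      Metric.hausdorffEdist_ne_top_of_nonempty_of_bounded hMn hLn hMb hLb
    have htri : Metric.hausdorffDist M {(0:En n)} ≤
        Metric.hausdorffDist M L + Metric.hausdorffDist L {(0:En n)} :=
      Metric.hausdorffDist_triangle fin1
    have hd1 : Metric.hausdorffDist M L = Metric.hausdorffDist L M :=
      Metric.hausdorffDist_comm
    have hm1 : (1:ℝ) ≤ max 1 (Metric.hausdorffDist L {(0:En n)}) := le_max_left _ _
    have hm2 : Metric.hausdorffDist L {(0:En n)} ≤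
        max 1 (Metric.hausdorffDist L {(0:En n)}) := le_max_right _ _
    have hd2 : (0:ℝ) ≤ Metric.hausdorffDist L M := Metric.hausdorffDist_nonneg
    apply max_le <;> linarith
  · simp only [dhatH, if_neg h1, if_pos h2, if_pos h3]
    norm_num
  · -- K ≠ ∅, L = ∅, M ≠ ∅
    simp only [dhatH, if_neg h1, if_pos h2, if_neg h3]
    have hKn := nonempty_iff_ne_empty.2 h1
    have hMn := nonempty_iff_ne_empty.2 h3
    have fin1 : EMetric.hausdorffEdist K {(0:En n)} ≠ ⊤ :=
      Metric.hausdorffEdist_ne_top_of_nonempty_of_bounded hKn hz hKb hzb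
    have htri : Metric.hausdorffDist K M ≤
        Metric.hausdorffDist K {(0:En n)} + Metric.hausdorffDist {(0:En n)} M :=
      Metric.hausdorffDist_triangle fin1
    have hd1 : Metric.hausdorffDist {(0:En n)} M = Metric.hausdorffDist M {(0:En n)} :=
      Metric.hausdorffDist_comm
    have hm1 : Metric.hausdorffDist K {(0:En n)} ≤
        max 1 (Metric.hausdorffDist K {(0:En n)}) := le_max_right _ _
    have hm2 : Metric.hausdorffDist M {(0:En n)} ≤
        max 1 (Metric.hausdorffDist M {(0:En n)}) := le_max_right _ _
    linarith
  · -- K ≠ ∅, L ≠ ∅, M = ∅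
    simp only [dhatH, if_neg h1, if_neg h2, if_pos h3]
    have hKn := nonempty_iff_ne_empty.2 h1
    have hLn := nonempty_iff_ne_empty.2 h2
    have fin1 : EMetric.hausdorffEdist K L ≠ ⊤ :=
      Metric.hausdorffEdist_ne_top_of_nonempty_of_bounded hKn hLn hKb hLb
    have htri : Metric.hausdorffDist K {(0:En n)} ≤
        Metric.hausdorffDist K L + Metric.hausdorffDist L {(0:En n)} :=
      Metric.hausdorffDist_triangle fin1
    have hm1 : (1:ℝ) ≤ max 1 (Metric.hausdorffDist L {(0:En n)}) := le_max_left _ _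
    have hm2 : Metric.hausdorffDist L {(0:En n)} ≤
        max 1 (Metric.hausdorffDist L {(0:En n)}) := le_max_right _ _
    have hd : (0:ℝ) ≤ Metric.hausdorffDist K L := Metric.hausdorffDist_nonneg
    apply max_le <;> linarith
  · -- all nonempty
    simp only [dhatH, if_neg h1, if_neg h2, if_neg h3]
    exact Metric.hausdorffDist_triangle
      (Metric.hausdorffEdist_ne_top_of_nonempty_of_bounded (nonempty_iff_ne_empty.2 h1)
        (nonempty_iff_ne_empty.2 h2) hKb hLb)

lemma dhat_zero_iff {K L : Set (En n)} (hKc : IsClosed K) (hLc : IsClosed L)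
    (hKb : IsBounded K) (hLb : IsBounded L) (h : dhatH K L = 0) : K = L := by
  unfold dhatH at h
  split_ifs at h with h1 h2 h3
  · rw [h1, h2]
  · exfalso
    have := le_max_left (1:ℝ) (Metric.hausdorffDist L {(0:En n)})
    rw [h] at this
    linarith
  · exfalso
    have := le_max_left (1:ℝ) (Metric.hausdorffDist K {(0:En n)})
    rw [h] at this
    linarith
  · have fin1 : EMetric.hausdorffEdist K L ≠ ⊤ :=
      Metric.hausdorffEdist_ne_top_of_nonempty_of_bounded (nonempty_iff_ne_empty.2 h1)
        (nonempty_iff_ne_empty.2 h3) hKb hLb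
    have := (Metric.hausdorffDist_zero_iff_closure_eq_closure fin1).1 h
    rwa [hKc.closure_eq, hLc.closure_eq] at this


lemma hEdist_eq_iSup {q : ℕ → En n} (hq : DenseRange q) (K L : Set (En n)) :
    hausdorffEdist K L = ⨆ i, ((infEdist (q i) K - infEdist (q i) L) ⊔
      (infEdist (q i) L - infEdist (q i) K)) := by
  set S := ⨆ i, ((infEdist (q i) K - infEdist (q i) L) ⊔
      (infEdist (q i) L - infEdist (q i) K)) with hS
  have key : ∀ (A B : Set (En n)),
      (∀ i, infEdist (q i) A - infEdist (q i) B ≤ S) →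
      ∀ x ∈ B, infEdist x A ≤ S := by
    intro A B hAB x hx
    apply ENNReal.le_of_forall_pos_le_add
    intro ε hε _
    have h0 : (0:ℝ) < (ε:ℝ)/2 := half_pos (NNReal.coe_pos.mpr hε)
    obtain ⟨i, hi⟩ := hq.exists_dist_lt x h0
    have h1 : infEdist x A ≤ infEdist (q i) A + edist x (q i) :=
      infEdist_le_infEdist_add_edist
    have h2 : infEdist (q i) A ≤ S + infEdist (q i) B := tsub_le_iff_right.1 (hAB i)
    have h3 : infEdist (q i) B ≤ edist (q i) x := infEdist_le_edist_of_mem hx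
    have h4 : edist x (q i) ≤ ENNReal.ofReal ((ε:ℝ)/2) := by
      rw [edist_dist]
      exact ENNReal.ofReal_le_ofReal hi.le
    have h5 : edist (q i) x ≤ ENNReal.ofReal ((ε:ℝ)/2) := by rw [edist_comm]; exact h4
    calc infEdist x A ≤ infEdist (q i) A + edist x (q i) := h1
      _ ≤ (S + infEdist (q i) B) + edist x (q i) := add_le_add_left h2 _
      _ ≤ (S + ENNReal.ofReal ((ε:ℝ)/2)) + ENNReal.ofReal ((ε:ℝ)/2) :=
          add_le_add (add_le_add_right (le_trans h3 h5) S) h4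
      _ = S + (ENNReal.ofReal ((ε:ℝ)/2) + ENNReal.ofReal ((ε:ℝ)/2)) := by rw [add_assoc]
      _ = S + ENNReal.ofReal (ε:ℝ) := by
          rw [← ENNReal.ofReal_add (by linarith) (by linarith)]
          norm_num
      _ = S + ε := by rw [ENNReal.ofReal_coe_nnreal]
  apply le_antisymm
  · apply hausdorffEdist_le_of_infEdist
    · intro x hx
      exact key L K (fun i => le_trans le_sup_right
        (le_iSup (fun j => (infEdist (q j) K - infEdist (q j) L) ⊔
          (infEdist (q j) L - infEdist (q j) K)) i)) x hx
    · intro x hx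
      exact key K L (fun i => le_trans le_sup_left
        (le_iSup (fun j => (infEdist (q j) K - infEdist (q j) L) ⊔
          (infEdist (q j) L - infEdist (q j) K)) i)) x hx
  · apply iSup_le
    intro i
    apply sup_le
    · rw [tsub_le_iff_right]
      calc infEdist (q i) K ≤ infEdist (q i) L + hausdorffEdist L K :=
          infEdist_le_infEdist_add_hausdorffEdist
        _ = hausdorffEdist K L + infEdist (q i) L := by
          unfold EMetric.hausdorffEdist; rw [hausdorffEdist_comm, add_comm]
    · rw [tsub_le_iff_right]
      calc infEdist (q i) L ≤ infEdist (q i) K + hausdorffEdist K L :=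
          infEdist_le_infEdist_add_hausdorffEdist
        _ = hausdorffEdist K L + infEdist (q i) K := add_comm _ _

lemma hEdist_singleton (L : Set (En n)) :
    hausdorffEdist L {(0 : En n)} = (⨆ x ∈ L, edist x 0) ⊔ infEdist 0 L := by
  unfold EMetric.hausdorffEdist; rw [hausdorffEdist_def]
  congr 1
  · apply biSup_congr
    intro x _
    exact infEdist_singleton
  · simp; rfl


lemma exists_integrandF (u v : En n → EReal) :
    ∃ F : ℝ → ℝ, Measurable F ∧ ∀ s, dhatH (Kset ζ u s) (Kset ζ v s) = F s := by
  obtain ⟨q, hq⟩ := TopologicalSpace.exists_dense_seq (En n)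
  classical
  refine ⟨fun s =>
    if Kset ζ u s = ∅ then
      (if Kset ζ v s = ∅ then 0 else
        max 1 (((⨆ x ∈ Kset ζ v s, edist x 0) ⊔ infEdist 0 (Kset ζ v s)).toReal))
    else if Kset ζ v s = ∅ then
      max 1 (((⨆ x ∈ Kset ζ u s, edist x 0) ⊔ infEdist 0 (Kset ζ u s)).toReal)
    else (⨆ i, ((infEdist (q i) (Kset ζ u s) - infEdist (q i) (Kset ζ v s)) ⊔
      (infEdist (q i) (Kset ζ v s) - infEdist (q i) (Kset ζ u s)))).toReal, ?_, ?_⟩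
  · have hme : ∀ (w : En n → EReal), MeasurableSet {s : ℝ | Kset ζ w s = ∅} := by
      intro w
      apply measurableSet_of_upper
      intro a ha b hab
      have hsub : Kset ζ w b ⊆ Kset ζ w a := Kset_anti w hab
      rw [mem_setOf_eq] at ha ⊢
      rw [ha] at hsub
      exact eq_empty_iff_forall_notMem.2 (fun x hx => notMem_empty x (hsub hx))
    have hbmeas : ∀ (w : En n → EReal), Measurable (fun s =>
        ((⨆ x ∈ Kset ζ w s, edist x 0) ⊔ infEdist 0 (Kset ζ w s)).toReal) := by
      intro w
      apply Measurable.ennreal_toReal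
      apply Measurable.sup
      · apply Antitone.measurable
        intro a b hab
        exact iSup_le_iSup_of_subset (Kset_anti w hab)
      · apply Monotone.measurable
        intro a b hab
        exact infEdist_anti (Kset_anti w hab)
    have hHmeas : Measurable (fun s =>
        (⨆ i, ((infEdist (q i) (Kset ζ u s) - infEdist (q i) (Kset ζ v s)) ⊔
          (infEdist (q i) (Kset ζ v s) - infEdist (q i) (Kset ζ u s)))).toReal) := by
      apply Measurable.ennreal_toReal
      apply Measurable.iSup
      intro i
      have h1 : Measurable (fun s => infEdist (q i) (Kset ζ u s)) :=
        Monotone.measurable (fun a b hab => infEdist_anti (Kset_anti u hab))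
      have h2 : Measurable (fun s => infEdist (q i) (Kset ζ v s)) :=
        Monotone.measurable (fun a b hab => infEdist_anti (Kset_anti v hab))
      exact (h1.sub h2).sup (h2.sub h1)
    exact Measurable.ite (hme u)
      (Measurable.ite (hme v) measurable_const (measurable_const.max (hbmeas v)))
      (Measurable.ite (hme v) (measurable_const.max (hbmeas u)) hHmeas)
  · intro s
    beta_reduce
    unfold dhatH
    by_cases h1 : Kset ζ u s = ∅ <;> by_cases h2 : Kset ζ v s = ∅
    · rw [if_pos h1, if_pos h2, if_pos h1, if_pos h2]
    · rw [if_pos h1, if_neg h2, if_pos h1, if_neg h2]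
      congr 1
      show (hausdorffEdist (Kset ζ v s) {(0 : En n)}).toReal = _
      rw [hEdist_singleton]
    · rw [if_neg h1, if_pos h2, if_neg h1, if_pos h2]
      congr 1
      show (hausdorffEdist (Kset ζ u s) {(0 : En n)}).toReal = _
      rw [hEdist_singleton]
    · rw [if_neg h1, if_neg h2, if_neg h1, if_neg h2]
      show (hausdorffEdist (Kset ζ u s) (Kset ζ v s)).toReal = _
      rw [hEdist_eq_iSup hq]


lemma key_integrable (hζ : Zeta ζ) {u v : En n → EReal} (hu : ConvC n u) (hv : ConvC n v) :
    IntegrableOn (fun s => dhatH (Kset ζ u s) (Kset ζ v s)) (Ioi (0:ℝ)) := by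
  obtain ⟨F, hFm, hFe⟩ := exists_integrandF (ζ := ζ) u v
  obtain ⟨c₁u, c₂u, hc₁u, hc₂u, hbu⟩ := sublevel_ball hu
  obtain ⟨c₁v, c₂v, hc₁v, hc₂v, hbv⟩ := sublevel_ball hv
  obtain ⟨mu, hmu⟩ := convc_bddBelow hu
  obtain ⟨mv, hmv⟩ := convc_bddBelow hv
  set m' := min mu mv with hm'
  set s₁ := ζ m' with hs₁
  have hs₁pos : 0 < s₁ := hζ.pos m'
  set C₁ := max c₁u c₁v with hC₁
  set C₂ := max c₂u c₂v with hC₂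
  have hC₁0 : 0 ≤ C₁ := le_trans hc₁u (le_max_left _ _)
  have hC₂0 : 0 ≤ C₂ := le_trans hc₂u.le (le_max_left _ _)
  set g : ℝ → ℝ :=
    Set.indicator (Ioc 0 s₁) (fun s => (1 + 2*C₁) + (2*C₂) * (Gfun ζ s).toReal) with hg
  have hGm : Measurable (fun s : ℝ => (Gfun ζ s).toReal) := Gfun_measurable.ennreal_toReal
  have hgint : Integrable g volume := by
    rw [hg, integrable_indicator_iff measurableSet_Ioc]
    apply Integrable.add
    · exact integrableOn_const measure_Ioc_lt_top.ne
    · refine ⟨(hGm.const_mul (2*C₂)).aestronglyMeasurable, ?_⟩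
      rw [hasFiniteIntegral_iff_norm]
      calc ∫⁻ s in Ioc (0:ℝ) s₁, ENNReal.ofReal ‖2*C₂*(Gfun ζ s).toReal‖
          ≤ ∫⁻ s in Ioc (0:ℝ) s₁, ENNReal.ofReal (2*C₂) * Gfun ζ s := by
            apply lintegral_mono
            intro s
            beta_reduce
            rw [Real.norm_of_nonneg (by positivity)]
            rw [ENNReal.ofReal_mul (by positivity)]
            exact mul_le_mul_right ENNReal.ofReal_toReal_le _
        _ = ENNReal.ofReal (2*C₂) * ∫⁻ s in Ioc (0:ℝ) s₁, Gfun ζ s :=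
            lintegral_const_mul _ Gfun_measurable
        _ ≤ ENNReal.ofReal (2*C₂) * ∫⁻ s in Ioi (0:ℝ), Gfun ζ s :=
            mul_le_mul_right
              (lintegral_mono' (Measure.restrict_mono Ioc_subset_Ioi_self le_rfl) le_rfl) _
        _ < ⊤ := ENNReal.mul_lt_top ENNReal.ofReal_lt_top (Gfun_lintegral hζ)
  have hfeq : (fun s => dhatH (Kset ζ u s) (Kset ζ v s)) = F := funext hFe
  rw [hfeq]
  apply Integrable.mono' hgint.integrableOn hFm.aestronglyMeasurable
  rw [ae_restrict_iff' measurableSet_Ioi]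
  apply ae_of_all
  intro s hs
  have hs0 : (0:ℝ) < s := hs
  rw [← hFe s, Real.norm_of_nonneg (dhat_nonneg _ _)]
  by_cases hcmp : s ≤ s₁
  · have hsIoc : s ∈ Ioc (0:ℝ) s₁ := ⟨hs0, hcmp⟩
    rw [hg, indicator_of_mem hsIoc]
    have hne : (Alev ζ s).Nonempty := ⟨m', show s ≤ ζ m' from hcmp⟩
    have hX0 : 0 ≤ (Gfun ζ s).toReal := ENNReal.toReal_nonneg
    have hGT : (Gfun ζ s).toReal = max (Tlev ζ s) 0 := Gfun_toReal hζ hs0 hne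
    have hmax0 : (0:ℝ) ≤ max (Tlev ζ s) 0 := le_max_right _ _
    have hKu : ∀ x ∈ Kset ζ u s, ‖x‖ ≤ C₁ + C₂ * (Gfun ζ s).toReal := by
      intro x hx
      have h := Kset_norm_le hζ hu.1 hbu hs0 x hx
      rw [hGT]
      have h2 := mul_le_mul_of_nonneg_right (le_max_left c₂u c₂v) hmax0
      have h3 := le_max_left c₁u c₁v
      calc ‖x‖ ≤ c₁u + c₂u * max (Tlev ζ s) 0 := h
      _ ≤ C₁ + C₂ * max (Tlev ζ s) 0 := by rw [hC₁, hC₂]; linarith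
    have hKv : ∀ x ∈ Kset ζ v s, ‖x‖ ≤ C₁ + C₂ * (Gfun ζ s).toReal := by
      intro x hx
      have h := Kset_norm_le hζ hv.1 hbv hs0 x hx
      rw [hGT]
      have h2 := mul_le_mul_of_nonneg_right (le_max_right c₂u c₂v) hmax0
      have h3 := le_max_right c₁u c₁v
      calc ‖x‖ ≤ c₁v + c₂v * max (Tlev ζ s) 0 := h
      _ ≤ C₁ + C₂ * max (Tlev ζ s) 0 := by rw [hC₁, hC₂]; linarith
    have hball := dhat_le_ball (add_nonneg hC₁0 (mul_nonneg hC₂0 hX0)) hKu hKv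
    calc dhatH (Kset ζ u s) (Kset ζ v s) ≤ 1 + 2 * (C₁ + C₂ * (Gfun ζ s).toReal) := hball
    _ = (1 + 2*C₁) + (2*C₂) * (Gfun ζ s).toReal := by ring
  · push_neg at hcmp
    have hζu : ζ mu < s := lt_of_le_of_lt (hζ.anti.antitone (min_le_left mu mv)) hcmp
    have hζv : ζ mv < s := lt_of_le_of_lt (hζ.anti.antitone (min_le_right mu mv)) hcmp
    have h1 : Kset ζ u s = ∅ := Kset_empty_of_lt hζ hu.1 hmu hζu
    have h2 : Kset ζ v s = ∅ := Kset_empty_of_lt hζ hv.1 hmv hζv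
    rw [hg, indicator_of_notMem (fun hmem => absurd hmem.2 (not_le.2 hcmp))]
    unfold dhatH
    rw [if_pos h1, if_pos h2]

end S16

theorem statement16 (n : ℕ) (hn : 1 ≤ n)
    (ζ : ℝ → ℝ) (hζpos : ∀ t, 0 < ζ t) (hζcont : Continuous ζ) (hζanti : StrictAnti ζ)
    (hmom : IntegrableOn ζ (Set.Ioi (0:ℝ))) :
    (∀ u v : En n → EReal, ConvC n u → ConvC n v →
        IntegrableOn (fun s => dhatH {x | s ≤ zeval ζ (u x)} {x | s ≤ zeval ζ (v x)})
          (Set.Ioi (0:ℝ))) ∧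
    (∀ u v : En n → EReal, ConvC n u → ConvC n v → 0 ≤ deltaH ζ u v) ∧
    (∀ u v : En n → EReal, ConvC n u → ConvC n v → deltaH ζ u v = deltaH ζ v u) ∧
    (∀ u v w : En n → EReal, ConvC n u → ConvC n v → ConvC n w →
        deltaH ζ u w ≤ deltaH ζ u v + deltaH ζ v w) ∧
    (∀ u v : En n → EReal, ConvC n u → ConvC n v → (deltaH ζ u v = 0 ↔ u = v)) := by
  have hζ : S16.Zeta ζ := ⟨hζpos, hζcont, hζanti, hmom⟩
  have hdel : ∀ u v : En n → EReal, deltaH ζ u v =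
      ∫ s in Set.Ioi (0:ℝ), dhatH (S16.Kset ζ u s) (S16.Kset ζ v s) := fun _ _ => rfl
  refine ⟨?_, ?_, ?_, ?_, ?_⟩
  · intro u v hu hv
    exact S16.key_integrable hζ hu hv
  · intro u v hu hv
    rw [hdel u v]
    exact MeasureTheory.integral_nonneg (fun s => S16.dhat_nonneg _ _)
  · intro u v hu hv
    rw [hdel u v, hdel v u]
    congr 1
    funext s
    exact S16.dhat_comm _ _
  · intro u v w hu hv hw
    rw [hdel u w, hdel u v, hdel v w]
    calc ∫ s in Ioi (0:ℝ), dhatH (S16.Kset ζ u s) (S16.Kset ζ w s)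
        ≤ ∫ s in Ioi (0:ℝ), (dhatH (S16.Kset ζ u s) (S16.Kset ζ v s) +
            dhatH (S16.Kset ζ v s) (S16.Kset ζ w s)) := by
          apply setIntegral_mono_on (S16.key_integrable hζ hu hw)
            ((S16.key_integrable hζ hu hv).add (S16.key_integrable hζ hv hw))
            measurableSet_Ioi
          intro s hs
          exact S16.dhat_triangle (S16.Kset_bounded hζ hu hs) (S16.Kset_bounded hζ hv hs)
            (S16.Kset_bounded hζ hw hs)
      _ = _ := MeasureTheory.integral_add (S16.key_integrable hζ hu hv)
            (S16.key_integrable hζ hv hw)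
  · intro u v hu hv
    constructor
    · intro h
      have hint := S16.key_integrable hζ hu hv
      have hnn : 0 ≤ fun s => dhatH (S16.Kset ζ u s) (S16.Kset ζ v s) :=
        fun s => S16.dhat_nonneg _ _
      rw [hdel u v] at h
      have h0 := (MeasureTheory.integral_eq_zero_iff_of_nonneg hnn hint).1 h
      have h0' : ∀ᵐ s ∂(volume : Measure ℝ), s ∈ Set.Ioi (0:ℝ) →
          dhatH (S16.Kset ζ u s) (S16.Kset ζ v s) = 0 := by
        rw [← ae_restrict_iff' measurableSet_Ioi]
        filter_upwards [h0] with s hs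
        simpa using hs
      rw [MeasureTheory.ae_iff] at h0'
      have hgood : ∀ a b : ℝ, 0 ≤ a → a < b →
          ∃ s', a < s' ∧ s' < b ∧ S16.Kset ζ u s' = S16.Kset ζ v s' := by
        intro a b ha hab
        by_contra hcon
        push_neg at hcon
        have hsub : Ioo a b ⊆ {s | ¬(s ∈ Set.Ioi (0:ℝ) →
            dhatH (S16.Kset ζ u s) (S16.Kset ζ v s) = 0)} := by
          intro s hsab
          rw [mem_setOf_eq]
          intro hP
          have hs0 : (0:ℝ) < s := lt_of_le_of_lt ha hsab.1
          have hd := hP hs0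
          have heq := S16.dhat_zero_iff (S16.Kset_closed hζ hu.1 hu.2.2.1 hs0)
            (S16.Kset_closed hζ hv.1 hv.2.2.1 hs0) (S16.Kset_bounded hζ hu hs0)
            (S16.Kset_bounded hζ hv hs0) hd
          exact absurd heq (hcon s hsab.1 hsab.2)
        have hnull := measure_mono_null hsub h0'
        rw [Real.volume_Ioo, ENNReal.ofReal_eq_zero] at hnull
        linarith
      have hgood' : ∀ a b : ℝ, 0 ≤ a → a < b →
          ∃ s', a < s' ∧ s' < b ∧ S16.Kset ζ v s' = S16.Kset ζ u s' := by
        intro a b ha hab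
        obtain ⟨s', h1, h2, h3⟩ := hgood a b ha hab
        exact ⟨s', h1, h2, h3.symm⟩
      have main : ∀ (p r : En n → EReal),
          (∀ a b : ℝ, 0 ≤ a → a < b →
            ∃ s', a < s' ∧ s' < b ∧ S16.Kset ζ p s' = S16.Kset ζ r s') →
          ∀ s : ℝ, 0 < s → S16.Kset ζ p s ⊆ S16.Kset ζ r s := by
        intro p r hg s hs x hx
        by_contra hltc
        have hZlt : zeval ζ (r x) < s := not_le.1 hltc
        have hZ0 : 0 ≤ zeval ζ (r x) := S16.zeval_nonneg hζ _
        have hc0 : 0 ≤ max (zeval ζ (r x)) (s/2) := le_trans (by linarith) (le_max_right _ _)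
        have hcs : max (zeval ζ (r x)) (s/2) < s := max_lt hZlt (by linarith)
        obtain ⟨s', hcs', hs's, heq⟩ := hg _ s hc0 hcs
        have hx' : x ∈ S16.Kset ζ p s' := S16.Kset_anti p hs's.le hx
        rw [heq] at hx'
        have h1 : s' ≤ zeval ζ (r x) := hx'
        have h2 : zeval ζ (r x) ≤ max (zeval ζ (r x)) (s/2) := le_max_left _ _
        linarith
      have hKeq : ∀ s : ℝ, 0 < s → S16.Kset ζ u s = S16.Kset ζ v s := fun s hs =>
        Set.Subset.antisymm (main u v hgood s hs) (main v u hgood' s hs)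
      funext x
      by_cases hut : u x = ⊤ <;> by_cases hvt : v x = ⊤
      · rw [hut, hvt]
      · exfalso
        have hvr : v x = (((v x).toReal : ℝ) : EReal) := (EReal.coe_toReal hvt (hv.1 x)).symm
        have hxK : x ∈ S16.Kset ζ v (ζ (v x).toReal) := by
          show ζ (v x).toReal ≤ zeval ζ (v x)
          conv_rhs => rw [hvr]
          rw [S16.zeval_coe]
        rw [← hKeq _ (hζpos (v x).toReal)] at hxK
        have h1 : ζ (v x).toReal ≤ zeval ζ (u x) := hxK
        rw [hut, S16.zeval_top] at h1
        linarith [hζpos (v x).toReal]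
      · exfalso
        have hur : u x = (((u x).toReal : ℝ) : EReal) := (EReal.coe_toReal hut (hu.1 x)).symm
        have hxK : x ∈ S16.Kset ζ u (ζ (u x).toReal) := by
          show ζ (u x).toReal ≤ zeval ζ (u x)
          conv_rhs => rw [hur]
          rw [S16.zeval_coe]
        rw [hKeq _ (hζpos (u x).toReal)] at hxK
        have h1 : ζ (u x).toReal ≤ zeval ζ (v x) := hxK
        rw [hvt, S16.zeval_top] at h1
        linarith [hζpos (u x).toReal]
      · have hur : u x = (((u x).toReal : ℝ) : EReal) := (EReal.coe_toReal hut (hu.1 x)).symm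
        have hvr : v x = (((v x).toReal : ℝ) : EReal) := (EReal.coe_toReal hvt (hv.1 x)).symm
        have hxu : x ∈ S16.Kset ζ u (ζ (u x).toReal) := by
          show ζ (u x).toReal ≤ zeval ζ (u x)
          conv_rhs => rw [hur]
          rw [S16.zeval_coe]
        rw [hKeq _ (hζpos (u x).toReal)] at hxu
        have h1 : ζ (u x).toReal ≤ zeval ζ (v x) := hxu
        rw [show zeval ζ (v x) = ζ (v x).toReal from by conv_lhs => rw [hvr, S16.zeval_coe]] at h1
        have hxv : x ∈ S16.Kset ζ v (ζ (v x).toReal) := by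
          show ζ (v x).toReal ≤ zeval ζ (v x)
          conv_rhs => rw [hvr]
          rw [S16.zeval_coe]
        rw [← hKeq _ (hζpos (v x).toReal)] at hxv
        have h2 : ζ (v x).toReal ≤ zeval ζ (u x) := hxv
        rw [show zeval ζ (u x) = ζ (u x).toReal from by conv_lhs => rw [hur, S16.zeval_coe]] at h2
        have hle1 : (v x).toReal ≤ (u x).toReal := hζanti.le_iff_ge.1 h1
        have hle2 : (u x).toReal ≤ (v x).toReal := hζanti.le_iff_ge.1 h2
        rw [hur, hvr, le_antisymm hle2 hle1]
    · intro h
      subst h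
      rw [hdel u u]
      have hz : (fun s => dhatH (S16.Kset ζ u s) (S16.Kset ζ u s)) = fun _ => (0:ℝ) := by
        funext s
        exact S16.dhat_self _
      rw [hz]
      exact integral_zero _ _
end
end

section
/- Let n ≥ 1 and let ζ : ℝ → (0,∞) be continuous and strictly decreasing with ∫₀^∞ ζ(t) dt < ∞. If u_k, u ∈ Conv_c(ℝⁿ) are such that δ_ζ^H(u_k,u) = ∫₀^∞ d̂_H({x : ζ(u_k(x)) ≥ s}, {x : ζ(u(x)) ≥ s}) ds → 0, then u_k epi-converges to u as k → ∞; moreover min_{x∈ℝⁿ} u_k(x) → min_{x∈ℝⁿ} u(x). -/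
open MeasureTheory Filter Topology Set
open scoped Classical ENNReal

noncomputable section

section Aux

open Metric Bornology

variable {n : ℕ}

/-- level set of `zeval ζ ∘ w` -/
def lev (ζ : ℝ → ℝ) (w : En n → EReal) (s : ℝ) : Set (En n) := {x | s ≤ zeval ζ (w x)}

lemma lev_antitone {ζ : ℝ → ℝ} {w : En n → EReal} {s s' : ℝ} (h : s ≤ s') :
    lev ζ w s' ⊆ lev ζ w s := fun x hx => le_trans h hx

lemma sublevel_closed {w : En n → EReal} (hw : LowerSemicontinuous w) (t : EReal) :
    IsClosed {x : En n | w x ≤ t} := by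
  have := lowerSemicontinuous_iff_isClosed_preimage.1 hw t
  simpa [Set.preimage, Set.Iic] using this

lemma sublevel_compact {w : En n → EReal} (hw : ConvC n w) (t : ℝ) :
    IsCompact {x : En n | w x ≤ (t : EReal)} := by
  obtain ⟨-, -, hlsc, -, hco⟩ := hw
  have h1 : ∀ᶠ x in cocompact (En n), w x ∈ Set.Ioi (t : EReal) :=
    hco (Ioi_mem_nhds (by simp))
  rw [Filter.hasBasis_cocompact.eventually_iff] at h1
  obtain ⟨K, hK, hKs⟩ := h1
  refine IsCompact.of_isClosed_subset hK (sublevel_closed hlsc _) ?_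
  intro x hx
  by_contra hxK
  exact absurd (hKs hxK) (by simpa using hx)

lemma sublevel_convex {w : En n → EReal} (hw : ConvC n w) (t : ℝ) :
    Convex ℝ {x : En n | w x ≤ (t : EReal)} := by
  intro x hx y hy a b ha hb hab
  have hx' : (x, t) ∈ epiSet w := hx
  have hy' : (y, t) ∈ epiSet w := hy
  have := hw.2.2.2.1 hx' hy' ha hb hab
  have h2 : (a • (x, t) + b • (y, t) : En n × ℝ) = (a • x + b • y, t) := by
    simp only [Prod.smul_mk, Prod.mk_add_mk, smul_eq_mul, Prod.mk.injEq, true_and, and_true]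
    linear_combination t * hab
  rw [h2] at this
  exact this

/-- lsc + coercive + proper attains a real minimum. -/
lemma convC_min {w : En n → EReal} (hw : ConvC n w) :
    ∃ (z : En n) (m : ℝ), w z = (m : EReal) ∧ ∀ y, w z ≤ w y := by
  obtain ⟨hbot, ⟨x₀, hx₀⟩, hlsc, hcvx, hco⟩ := hw
  set r₀ : ℝ := (w x₀).toReal with hr₀
  have hwx₀ : w x₀ = (r₀ : EReal) := (EReal.coe_toReal hx₀ (hbot x₀)).symm
  set S : Set (En n) := {x | w x ≤ (r₀ : EReal)} with hS
  have hScpt : IsCompact S := sublevel_compact ⟨hbot, ⟨x₀, hx₀⟩, hlsc, hcvx, hco⟩ r₀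
  have hSne : S.Nonempty := ⟨x₀, le_of_eq hwx₀⟩
  -- approximate minimizing sequence
  set m : EReal := ⨅ x : S, w x with hm
  have hmle : ∀ x ∈ S, m ≤ w x := fun x hx => iInf_le_of_le ⟨x, hx⟩ le_rfl
  have hmne : m ≠ ⊤ → True := fun _ => trivial
  -- construct sequence approaching m
  have key : ∃ z ∈ S, w z ≤ m := by
    rcases eq_or_lt_of_le (le_top : m ≤ ⊤) with hmt | hmlt
    · exact ⟨x₀, le_of_eq hwx₀, by rw [hmt]; exact le_top⟩
    -- choose approximating EReal sequence a j > m tending to m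
    obtain ⟨a, hagt, hatend⟩ : ∃ a : ℕ → EReal, (∀ j, m < a j) ∧
        Tendsto a atTop (𝓝 m) := by
      rcases eq_bot_or_bot_lt m with hmb | hmb
      · refine ⟨fun j => ((-(j:ℝ) : ℝ) : EReal), fun j => by rw [hmb]; exact EReal.bot_lt_coe _, ?_⟩
        rw [hmb, EReal.tendsto_nhds_bot_iff_real]
        intro x
        filter_upwards [eventually_ge_atTop (⌈-x⌉₊ + 1)] with j hj
        have h1 : (-x : ℝ) ≤ (⌈-x⌉₊ : ℝ) := Nat.le_ceil _
        have h2 : ((⌈-x⌉₊ + 1 : ℕ) : ℝ) ≤ (j : ℝ) := Nat.cast_le.2 hj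
        refine EReal.coe_lt_coe_iff.2 ?_
        push_cast at h2
        linarith
      · set mr := m.toReal with hmr
        have hmeq : m = (mr : EReal) := (EReal.coe_toReal hmlt.ne (hmb.ne')).symm
        refine ⟨fun j => ((mr + 1/(j+1) : ℝ) : EReal), fun j => ?_, ?_⟩
        · rw [hmeq]
          have hp : (0:ℝ) < 1/((j:ℝ)+1) := by positivity
          exact EReal.coe_lt_coe_iff.2 (by linarith)
        · rw [hmeq, EReal.tendsto_coe]
          have : Tendsto (fun j : ℕ => 1/((j:ℝ)+1)) atTop (𝓝 0) :=
            tendsto_one_div_add_atTop_nhds_zero_nat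
          simpa using (tendsto_const_nhds.add this)
    -- choose points
    have hsel : ∀ j : ℕ, ∃ x : S, w (x : En n) < a j := by
      intro j
      have : m < a j := hagt j
      rw [hm] at this
      exact iInf_lt_iff.1 this
    choose xs hxs using hsel
    obtain ⟨z, hzS, φ, hφ, hzt⟩ := hScpt.tendsto_subseq (fun j => (xs j).2)
    refine ⟨z, hzS, ?_⟩
    by_contra hz
    push_neg at hz
    obtain ⟨b, hb1, hb2⟩ := exists_between hz
    have h1 : ∀ᶠ y in 𝓝 z, b < w y := hlsc z b hb2
    have h2 : ∀ᶠ j in atTop, b < w ((xs (φ j) : En n)) := hzt.eventually h1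
    have h3 : ∀ᶠ j in atTop, a (φ j) < b :=
      (hatend.comp hφ.tendsto_atTop).eventually_lt_const hb1
    obtain ⟨j, hj2, hj3⟩ := (h2.and h3).exists
    exact absurd ((hxs (φ j)).trans hj3) (not_lt.2 hj2.le)
  obtain ⟨z, hzS, hzm⟩ := key
  refine ⟨z, (w z).toReal, (EReal.coe_toReal ?_ (hbot z)).symm, ?_⟩
  · exact ne_top_of_le_ne_top (by simp) hzS
  · intro y
    by_cases hyS : y ∈ S
    · exact le_trans hzm (hmle y hyS)
    · have hry : (r₀ : EReal) ≤ w y := (not_le.1 (fun h => hyS h)).le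
      have h4 : w z ≤ (r₀ : EReal) :=
        hzm.trans ((hmle x₀ (le_of_eq hwx₀)).trans (le_of_eq hwx₀))
      exact h4.trans hry

end Aux
section Aux2

open Metric Bornology

variable {n : ℕ} {ζ : ℝ → ℝ} {w : En n → EReal}

lemma mem_lev_of_le (hζanti : StrictAnti ζ) (hbot : ∀ x, w x ≠ ⊥) {x : En n} {t s : ℝ}
    (h : w x ≤ (t : EReal)) (hs : s ≤ ζ t) : x ∈ lev ζ w s := by
  have hxt : w x ≠ ⊤ := ne_top_of_le_ne_top (by simp) h
  have h1 : (w x).toReal ≤ t := EReal.toReal_le_toReal h (hbot x) (by simp)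
  have h2 : ζ t ≤ ζ (w x).toReal := hζanti.antitone h1
  show s ≤ zeval ζ (w x)
  rw [zeval, if_neg hxt]
  exact hs.trans h2

lemma lev_subset_sublevel (hζanti : StrictAnti ζ) {t s : ℝ} (hs : 0 < s) (hst : ζ t < s) :
    lev ζ w s ⊆ {x | w x ≤ (t : EReal)} := by
  intro x hx
  have hx' : s ≤ zeval ζ (w x) := hx
  by_cases hxb : w x = ⊥
  · show w x ≤ (t : EReal); rw [hxb]; exact bot_le
  by_cases hxt : w x = ⊤
  · rw [zeval, if_pos hxt] at hx'; linarith
  rw [zeval, if_neg hxt] at hx'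
  have h1 : ζ t < ζ (w x).toReal := lt_of_lt_of_le hst hx'
  have h2 : (w x).toReal < t := (hζanti.lt_iff_gt).1 h1
  show w x ≤ (t : EReal)
  calc w x = ((w x).toReal : EReal) := (EReal.coe_toReal hxt hxb).symm
    _ ≤ (t : EReal) := EReal.coe_le_coe_iff.2 h2.le

/-- From the moment condition, `ζ` takes values below any positive `s`. -/
lemma exists_zeta_lt (hζpos : ∀ t, 0 < ζ t) (hζcont : Continuous ζ)
    (hmom : MeasureTheory.IntegrableOn ζ (Set.Ioi (0:ℝ))) {s : ℝ} (hs : 0 < s) :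
    ∃ t : ℝ, ζ t < s := by
  by_contra h
  push_neg at h
  have h2 : {a : ℝ | s ≤ ζ a} = Set.univ := Set.eq_univ_of_forall (fun a => h a)
  have h3 := hmom.measure_ge_lt_top hs
  rw [h2, MeasureTheory.Measure.restrict_apply_univ, Real.volume_Ioi] at h3
  exact absurd h3 (lt_irrefl ⊤)

end Aux2
section Aux3

open Metric Bornology MeasureTheory

variable {n : ℕ} {ζ : ℝ → ℝ} {w : En n → EReal}

lemma lev_nonempty (hζanti : StrictAnti ζ) (hbot : ∀ x, w x ≠ ⊥) {z : En n} {m : ℝ}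
    (hz : w z = (m : EReal)) {s : ℝ} (hs : s ≤ ζ m) : (lev ζ w s).Nonempty :=
  ⟨z, mem_lev_of_le hζanti hbot (le_of_eq hz) hs⟩

lemma lev_empty (hζpos : ∀ t, 0 < ζ t) (hζanti : StrictAnti ζ) {z : En n} {m : ℝ}
    (hz : w z = (m : EReal)) (hmin : ∀ y, w z ≤ w y) {s : ℝ} (hs : ζ m < s) :
    lev ζ w s = ∅ := by
  rw [Set.eq_empty_iff_forall_notMem]
  intro x hx
  have hx' : s ≤ zeval ζ (w x) := hx
  by_cases hxt : w x = ⊤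
  · rw [zeval, if_pos hxt] at hx'
    linarith [hζpos m]
  · rw [zeval, if_neg hxt] at hx'
    have h1 : (m : EReal) ≤ w x := hz ▸ hmin x
    have h2 : m ≤ (w x).toReal := by
      have := EReal.toReal_le_toReal h1 (by simp) hxt
      simpa using this
    have h3 : ζ (w x).toReal ≤ ζ m := hζanti.antitone h2
    linarith [hx'.trans h3]

lemma lev_isBounded (hζpos : ∀ t, 0 < ζ t) (hζcont : Continuous ζ) (hζanti : StrictAnti ζ)
    (hmom : IntegrableOn ζ (Set.Ioi (0:ℝ))) (hw : ConvC n w) {s : ℝ} (hs : 0 < s) :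
    IsBounded (lev ζ w s) := by
  obtain ⟨t, ht⟩ := exists_zeta_lt hζpos hζcont hmom hs
  exact ((sublevel_compact hw t).isBounded).subset (lev_subset_sublevel hζanti hs ht)

/-- Linear growth from below for convex coercive functions. -/
lemma convC_growth (hw : ConvC n w) {z : En n} {m : ℝ}
    (hz : w z = (m : EReal)) (hmin : ∀ y, w z ≤ w y) :
    ∃ R : ℝ, 1 ≤ R ∧ ∀ x : En n, ((m - 1 + ‖x - z‖ / R : ℝ) : EReal) ≤ w x := by
  obtain ⟨R₀, hR₀⟩ := (sublevel_compact hw (m + 1)).isBounded.subset_closedBall z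
  set R : ℝ := max (max R₀ 0 + 1) 1 with hR
  have hR1 : 1 ≤ R := le_max_right _ _
  have hRpos : 0 < R := lt_of_lt_of_le one_pos hR1
  have hRR₀ : R₀ < R := lt_of_le_of_lt (le_max_left R₀ 0) (lt_of_lt_of_le (by linarith [le_max_left (max R₀ 0 + 1) 1]) le_rfl)
  refine ⟨R, hR1, fun x => ?_⟩
  by_cases hxt : w x = ⊤
  · rw [hxt]; exact le_top
  have hxb : w x ≠ ⊥ := hw.1 x
  set r : ℝ := (w x).toReal with hr
  have hwx : w x = (r : EReal) := (EReal.coe_toReal hxt hxb).symm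
  set d : ℝ := ‖x - z‖ with hd
  have hd0 : 0 ≤ d := norm_nonneg _
  rw [hwx, EReal.coe_le_coe_iff]
  by_cases hcase : d ≤ R
  · -- then rhs ≤ m ≤ r
    have hmr : m ≤ r := by
      have := hz ▸ hmin x
      rw [hwx] at this
      exact_mod_cast this
    have : d / R ≤ 1 := (div_le_one hRpos).2 hcase
    linarith
  · push_neg at hcase
    set l : ℝ := R / d with hl
    have hl0 : 0 < l := div_pos hRpos (lt_trans hRpos hcase)
    have hl1 : l < 1 := (div_lt_one (lt_trans hRpos hcase)).2 hcase
    set y : En n := (1 - l) • z + l • x with hy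
    have hyz : ‖y - z‖ = R := by
      have : y - z = l • (x - z) := by
        rw [hy]
        module
      have hdne : d ≠ 0 := ne_of_gt (lt_trans hRpos hcase)
      rw [this, norm_smul]
      simp only [Real.norm_eq_abs, abs_of_pos hl0]
      rw [hl, ← hd]
      field_simp
    have hynotS : ¬ (w y ≤ ((m + 1 : ℝ) : EReal)) := by
      intro hyS
      have := hR₀ hyS
      rw [Metric.mem_closedBall, dist_eq_norm] at this
      rw [hyz] at this
      linarith
    -- convexity
    have hcvx := hw.2.2.2.1
    have hmemz : (z, m) ∈ epiSet w := by show w z ≤ _; rw [hz]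
    have hmemx : (x, r) ∈ epiSet w := by show w x ≤ _; rw [hwx]
    have hcomb := hcvx hmemz hmemx (by linarith : (0:ℝ) ≤ 1 - l) hl0.le (by ring)
    have hcombeq : ((1 - l) • ((z, m) : En n × ℝ) + l • ((x, r) : En n × ℝ)) =
        (y, (1 - l) * m + l * r) := by
      simp only [Prod.smul_mk, Prod.mk_add_mk, smul_eq_mul, hy]
    rw [hcombeq] at hcomb
    have hwy : w y ≤ (((1 - l) * m + l * r : ℝ) : EReal) := hcomb
    have h5 : m + 1 < (1 - l) * m + l * r := by
      by_contra h6
      push_neg at h6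
      exact hynotS (hwy.trans (EReal.coe_le_coe_iff.2 h6))
    -- solve:  l * r > l * m + 1  so r > m + 1/l = m + d/R
    have h7 : l * r > l * m + 1 := by nlinarith
    have h8 : m + 1 / l < r := by
      have hml : (m + 1 / l) * l < r * l := by
        have hlne : l ≠ 0 := ne_of_gt hl0
        have : (m + 1 / l) * l = l * m + 1 := by field_simp
        rw [this]
        linarith
      exact lt_of_mul_lt_mul_right hml hl0.le
    have h9 : 1 / l = d / R := by
      rw [hl]
      rw [one_div_div]
    rw [h9] at h8
    linarith

end Aux3
section Aux4

open Metric Bornology MeasureTheory Filter Topology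

variable {n : ℕ}

/-- truncated "inverse" of ζ -/
def TB (ζ : ℝ → ℝ) (m : ℝ) (s : ℝ) : ℝ := sSup ({t | s ≤ ζ t} ∪ {m - 1})

lemma TB_bddAbove {ζ : ℝ → ℝ} (hζanti : StrictAnti ζ) {m s : ℝ} {t₀ : ℝ} (ht₀ : ζ t₀ < s) :
    BddAbove ({t | s ≤ ζ t} ∪ {m - 1}) := by
  refine ⟨max t₀ (m - 1), fun t ht => ?_⟩
  rcases ht with ht | ht
  · have : ζ t₀ < ζ t := lt_of_lt_of_le ht₀ ht
    exact le_trans (hζanti.lt_iff_gt.1 this).le (le_max_left _ _)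
  · rw [Set.mem_singleton_iff] at ht
    rw [ht]
    exact le_max_right _ _

lemma TB_antitoneOn {ζ : ℝ → ℝ} (hζpos : ∀ t, 0 < ζ t) (hζcont : Continuous ζ)
    (hζanti : StrictAnti ζ) (hmom : IntegrableOn ζ (Set.Ioi (0:ℝ))) (m : ℝ) :
    AntitoneOn (TB ζ m) (Set.Ioi (0:ℝ)) := by
  intro s hs s' hs' hss
  obtain ⟨t₀, ht₀⟩ := exists_zeta_lt hζpos hζcont hmom hs
  refine csSup_le_csSup (TB_bddAbove hζanti ht₀) (by simp) ?_
  intro t ht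
  rcases ht with ht | ht
  · exact Or.inl (le_trans hss ht)
  · exact Or.inr ht

lemma TB_ge {ζ : ℝ → ℝ} (hζanti : StrictAnti ζ) {m s : ℝ} {t₀ : ℝ} (ht₀ : ζ t₀ < s)
    {t : ℝ} (ht : s ≤ ζ t) : t ≤ TB ζ m s :=
  le_csSup (TB_bddAbove hζanti ht₀) (Or.inl ht)

/-- radius bound for level sets -/
lemma lev_radius {ζ : ℝ → ℝ} {w : En n → EReal} (hζpos : ∀ t, 0 < ζ t)
    (hζcont : Continuous ζ) (hζanti : StrictAnti ζ) (hmom : IntegrableOn ζ (Set.Ioi (0:ℝ)))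
    (hbot : ∀ x, w x ≠ ⊥) {z : En n} {m R : ℝ}
    (hgrow : ∀ x : En n, ((m - 1 + ‖x - z‖ / R : ℝ) : EReal) ≤ w x) (hR : 1 ≤ R)
    {s : ℝ} (hs : 0 < s) {x : En n} (hx : x ∈ lev ζ w s) :
    ‖x‖ ≤ ‖z‖ + R * (1 + max 0 (TB ζ m s - m)) := by
  obtain ⟨t₀, ht₀⟩ := exists_zeta_lt hζpos hζcont hmom hs
  have hx' : s ≤ zeval ζ (w x) := hx
  have hRpos : 0 < R := lt_of_lt_of_le one_pos hR
  by_cases hxt : w x = ⊤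
  · rw [zeval, if_pos hxt] at hx'; linarith
  rw [zeval, if_neg hxt] at hx'
  set r : ℝ := (w x).toReal with hr
  have h1 : m - 1 + ‖x - z‖ / R ≤ r := by
    have := hgrow x
    rw [← EReal.coe_toReal hxt (hbot x)] at this
    exact_mod_cast this
  have h2 : r ≤ TB ζ m s := TB_ge hζanti ht₀ hx'
  have h3 : r - m ≤ max 0 (TB ζ m s - m) := le_max_of_le_right (by linarith)
  have h4 : ‖x - z‖ / R ≤ 1 + max 0 (TB ζ m s - m) := by linarith
  have h5 : ‖x - z‖ ≤ R * (1 + max 0 (TB ζ m s - m)) := by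
    rw [div_le_iff₀ hRpos] at h4
    linarith [h4]
  calc ‖x‖ ≤ ‖z‖ + ‖x - z‖ := by
        have := norm_add_le z (x - z)
        simpa using this
    _ ≤ _ := by linarith

/-- countable sup of measurable real functions, bounded pointwise, is measurable -/
lemma measurable_ciSup_nat {h : ℕ → ℝ → ℝ} (hm : ∀ i, Measurable (h i))
    (hb : ∀ s, BddAbove (Set.range fun i => h i s)) :
    Measurable (fun s => ⨆ i, h i s) := by
  -- partial maxima
  let p : ℕ → ℝ → ℝ := fun N => Nat.rec (h 0) (fun N pN s => max (pN s) (h (N+1) s)) N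
  have hpm : ∀ N, Measurable (p N) := by
    intro N
    induction N with
    | zero => exact hm 0
    | succ N ih => exact ih.max (hm (N+1))
  have hple : ∀ N s, p N s ≤ ⨆ i, h i s := by
    intro N
    induction N with
    | zero => intro s; exact le_ciSup (hb s) 0
    | succ N ih => intro s; exact max_le (ih s) (le_ciSup (hb s) (N+1))
  have hhlep : ∀ i s, h i s ≤ p i s := by
    intro i
    induction i with
    | zero => intro s; exact le_rfl
    | succ i _ => intro s; exact le_max_right _ _
  have hpmono : ∀ s, Monotone (fun N => p N s) := by
    intro s
    refine monotone_nat_of_le_succ (fun N => ?_)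
    exact le_max_left _ _
  have htend : Tendsto p atTop (𝓝 (fun s => ⨆ i, h i s)) := by
    rw [tendsto_pi_nhds]
    intro s
    have hb2 : BddAbove (Set.range fun N => p N s) := by
      obtain ⟨B, hB⟩ := hb s
      refine ⟨⨆ i, h i s, fun y hy => ?_⟩
      obtain ⟨N, rfl⟩ := hy
      exact hple N s
    have := tendsto_atTop_ciSup (hpmono s) hb2
    have heq : (⨆ N, p N s) = ⨆ i, h i s := by
      apply le_antisymm
      · exact ciSup_le (fun N => hple N s)
      · exact ciSup_le (fun i => le_trans (hhlep i s) (le_ciSup hb2 i))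
    rwa [heq] at this
  exact measurable_of_tendsto_metrizable' atTop hpm htend

end Aux4
section Aux5

open Metric Bornology MeasureTheory Filter Topology TopologicalSpace

variable {n : ℕ}

lemma abs_infDist_sub_le {K L : Set (En n)} (hKne : K.Nonempty) (hLne : L.Nonempty)
    (hKb : IsBounded K) (hLb : IsBounded L) (x : En n) :
    |infDist x K - infDist x L| ≤ hausdorffDist K L := by
  have hed : EMetric.hausdorffEdist K L ≠ ⊤ :=
    hausdorffEdist_ne_top_of_nonempty_of_bounded hKne hLne hKb hLb
  have hed' : EMetric.hausdorffEdist L K ≠ ⊤ := by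
    rw [EMetric.hausdorffEdist] at hed ⊢; rwa [EMetric.hausdorffEdist_comm]
  rw [abs_le]
  constructor
  · have := infDist_le_infDist_add_hausdorffDist (x := x) hed
    linarith [this]
  · have := infDist_le_infDist_add_hausdorffDist (x := x) hed'
    rw [hausdorffDist_comm] at this
    linarith [this]

lemma hd_eq_iSup {K L : Set (En n)} (hKne : K.Nonempty) (hLne : L.Nonempty)
    (hKb : IsBounded K) (hLb : IsBounded L) :
    hausdorffDist K L = ⨆ i, |infDist (denseSeq (En n) i) K - infDist (denseSeq (En n) i) L| := by
  set f : En n → ℝ := fun x => |infDist x K - infDist x L| with hf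
  have hfb : ∀ x, f x ≤ hausdorffDist K L := fun x => abs_infDist_sub_le hKne hLne hKb hLb x
  have hbdd : BddAbove (Set.range fun i => f (denseSeq (En n) i)) :=
    ⟨hausdorffDist K L, by rintro y ⟨i, rfl⟩; exact hfb _⟩
  set S : ℝ := ⨆ i, f (denseSeq (En n) i) with hS
  have hS0 : 0 ≤ S := le_trans (abs_nonneg _) (le_ciSup hbdd 0)
  have hfcont : Continuous f := by
    apply Continuous.abs
    exact (continuous_infDist_pt K).sub (continuous_infDist_pt L)
  have hall : ∀ x : En n, f x ≤ S := by
    intro x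
    have hclosed : IsClosed {y : En n | f y ≤ S} := isClosed_le hfcont continuous_const
    have hsub : Set.range (denseSeq (En n)) ⊆ {y | f y ≤ S} := by
      rintro y ⟨i, rfl⟩
      exact le_ciSup hbdd i
    have hdense := denseRange_denseSeq (En n)
    have : closure (Set.range (denseSeq (En n))) ⊆ {y | f y ≤ S} :=
      closure_minimal hsub hclosed
    exact this (hdense x)
  apply le_antisymm
  · refine hausdorffDist_le_of_infDist hS0 (fun a ha => ?_) (fun b hb => ?_)
    · have := hall a
      rw [hf] at this
      simp only at this
      rw [infDist_zero_of_mem ha] at this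
      rw [abs_sub_comm] at this
      calc infDist a L = |infDist a L - 0| := by rw [sub_zero, abs_of_nonneg infDist_nonneg]
        _ ≤ S := this
    · have := hall b
      rw [hf] at this
      simp only at this
      rw [infDist_zero_of_mem hb] at this
      calc infDist b K = |infDist b K - 0| := by rw [sub_zero, abs_of_nonneg infDist_nonneg]
        _ ≤ S := by rw [sub_zero] at this ⊢; exact this
  · exact ciSup_le (fun i => hfb _)

end Aux5
section Aux6

open Metric Bornology MeasureTheory Filter Topology TopologicalSpace

variable {n : ℕ}

lemma dhatH_nonneg (K L : Set (En n)) : 0 ≤ dhatH K L := by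
  rw [dhatH]
  split_ifs
  · exact le_rfl
  · exact le_max_of_le_left zero_le_one
  · exact le_max_of_le_left zero_le_one
  · exact hausdorffDist_nonneg

lemma dhatH_comm (K L : Set (En n)) : dhatH K L = dhatH L K := by
  by_cases h1 : K = ∅ <;> by_cases h2 : L = ∅ <;>
    simp [dhatH, h1, h2, hausdorffDist_comm]

lemma lev_univ {ζ : ℝ → ℝ} {w : En n → EReal} (hζpos : ∀ t, 0 < ζ t) {s : ℝ} (hs : s ≤ 0) :
    lev ζ w s = Set.univ := by
  rw [Set.eq_univ_iff_forall]
  intro x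
  show s ≤ zeval ζ (w x)
  rw [zeval]
  split_ifs
  · exact hs
  · exact hs.trans (hζpos _).le

end Aux6
section Aux6b

open Metric Bornology MeasureTheory Filter Topology TopologicalSpace

lemma phi_integrable {ζ : ℝ → ℝ} (hζpos : ∀ t, 0 < ζ t) (hζcont : Continuous ζ)
    (hζanti : StrictAnti ζ) (hmom : IntegrableOn ζ (Set.Ioi (0:ℝ)))
    (m c : ℝ) (φ : ℝ → ℝ) (hmeas : Measurable φ) (hnn : ∀ s, 0 ≤ φ s)
    (heq : ∀ s, 0 < s → φ s = max 0 (TB ζ m s - m)) :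
    IntegrableOn φ (Set.Ioc (0:ℝ) c) := by
  set μ := MeasureTheory.volume.restrict (Set.Ioc (0:ℝ) c) with hμ
  refine ⟨hmeas.aestronglyMeasurable, ?_⟩
  rw [hasFiniteIntegral_iff_ofReal (Filter.Eventually.of_forall hnn)]
  have hlayer := lintegral_eq_lintegral_meas_lt μ (Filter.Eventually.of_forall hnn)
    hmeas.aemeasurable
  rw [hlayer]
  -- bound each measure
  have hbound : ∀ t : ℝ, t ∈ Set.Ioi (0:ℝ) →
      μ {a : ℝ | t < φ a} ≤ ENNReal.ofReal (ζ (m + t)) := by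
    intro t ht
    have ht' : (0:ℝ) < t := ht
    rw [hμ, MeasureTheory.Measure.restrict_apply (measurableSet_lt measurable_const hmeas)]
    have hsub : {a : ℝ | t < φ a} ∩ Set.Ioc 0 c ⊆ Set.Ioc 0 (ζ (m + t)) := by
      rintro a ⟨ha1, ha2, ha3⟩
      have haphi : t < φ a := ha1
      rw [heq a ha2] at haphi
      have h4 : m + t < TB ζ m a := by
        rcases max_cases 0 (TB ζ m a - m) with ⟨hmax, -⟩ | ⟨hmax, -⟩
        · rw [hmax] at haphi; linarith
        · rw [hmax] at haphi; linarith
      have h5 : ∃ b ∈ ({t' | a ≤ ζ t'} ∪ {m - 1}), m + t < b :=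
        exists_lt_of_lt_csSup ⟨m - 1, Or.inr rfl⟩ h4
      obtain ⟨b, hb, hb2⟩ := h5
      rcases hb with hb | hb
      · have h6 : ζ b ≤ ζ (m + t) := (hζanti.lt_iff_gt.2 hb2).le
        exact ⟨ha2, le_trans hb h6⟩
      · rw [Set.mem_singleton_iff] at hb
        rw [hb] at hb2
        linarith
    calc MeasureTheory.volume ({a : ℝ | t < φ a} ∩ Set.Ioc 0 c)
        ≤ MeasureTheory.volume (Set.Ioc 0 (ζ (m + t))) := measure_mono hsub
      _ = ENNReal.ofReal (ζ (m + t)) := by rw [Real.volume_Ioc, sub_zero]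
  have hmono : ∫⁻ t in Set.Ioi (0:ℝ), μ {a : ℝ | t < φ a} ≤
      ∫⁻ t in Set.Ioi (0:ℝ), ENNReal.ofReal (ζ (m + t)) := by
    refine setLIntegral_mono_ae ?_ ?_
    · exact (ENNReal.measurable_ofReal.comp (hζcont.measurable.comp
        (measurable_const.add measurable_id))).aemeasurable
    · exact Filter.Eventually.of_forall hbound
  refine lt_of_le_of_lt hmono ?_
  -- the shifted integral is finite
  have hIm : IntegrableOn ζ (Set.Ioi m) := by
    rcases le_or_gt 0 m with hm | hm
    · exact hmom.mono_set (fun x hx => lt_of_le_of_lt hm hx)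
    · have hcpt : IntegrableOn ζ (Set.Ioc m 0) := hζcont.integrableOn_Ioc
      have := hcpt.union hmom
      refine this.mono_set ?_
      intro x hx
      rcases le_or_gt x 0 with h | h
      · exact Or.inl ⟨hx, h⟩
      · exact Or.inr h
  set Φ : ℝ → ENNReal := Set.indicator (Set.Ioi m) (fun x => ENNReal.ofReal (ζ x)) with hΦ
  have hshift : ∫⁻ t in Set.Ioi (0:ℝ), ENNReal.ofReal (ζ (m + t)) = ∫⁻ x, Φ x := by
    rw [← MeasureTheory.lintegral_indicator measurableSet_Ioi]
    rw [← MeasureTheory.lintegral_add_right_eq_self Φ m]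
    congr 1
    funext t
    by_cases ht : (0:ℝ) < t
    · rw [Set.indicator_of_mem (show t ∈ Set.Ioi (0:ℝ) from ht), hΦ,
        Set.indicator_of_mem (show t + m ∈ Set.Ioi m by simp only [Set.mem_Ioi]; linarith)]
      rw [add_comm]
    · rw [Set.indicator_of_notMem (show t ∉ Set.Ioi (0:ℝ) from ht), hΦ,
        Set.indicator_of_notMem (show t + m ∉ Set.Ioi m by simp only [Set.mem_Ioi]; intro h; exact ht (by linarith))]
  rw [hshift, hΦ, MeasureTheory.lintegral_indicator measurableSet_Ioi]
  exact hIm.lintegral_lt_top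

end Aux6b
section Aux7

open Metric Bornology MeasureTheory Filter Topology TopologicalSpace

variable {n : ℕ}

/-- Key integrability: the `dhatH` integrand is integrable on `(0,∞)`. -/
lemma integrable_dhatH {ζ : ℝ → ℝ} (hζpos : ∀ t, 0 < ζ t) (hζcont : Continuous ζ)
    (hζanti : StrictAnti ζ) (hmom : IntegrableOn ζ (Set.Ioi (0:ℝ)))
    {w1 w2 : En n → EReal} (h1 : ConvC n w1) (h2 : ConvC n w2) :
    IntegrableOn (fun s => dhatH (lev ζ w1 s) (lev ζ w2 s)) (Set.Ioi (0:ℝ)) := by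
  classical
  obtain ⟨z1, m1, hz1, hmin1⟩ := convC_min h1
  obtain ⟨z2, m2, hz2, hmin2⟩ := convC_min h2
  obtain ⟨R1, hR1, hgrow1⟩ := convC_growth h1 hz1 hmin1
  obtain ⟨R2, hR2, hgrow2⟩ := convC_growth h2 hz2 hmin2
  set c1 : ℝ := ζ m1 with hc1
  set c2 : ℝ := ζ m2 with hc2
  have hc1pos : 0 < c1 := hζpos m1
  have hc2pos : 0 < c2 := hζpos m2
  set F : ℝ → ℝ := fun s => dhatH (lev ζ w1 s) (lev ζ w2 s) with hF
  -- nonemptiness and emptiness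
  have hne1 : ∀ s : ℝ, s ≤ c1 → (lev ζ w1 s).Nonempty :=
    fun s hs => lev_nonempty hζanti h1.1 hz1 hs
  have hne2 : ∀ s : ℝ, s ≤ c2 → (lev ζ w2 s).Nonempty :=
    fun s hs => lev_nonempty hζanti h2.1 hz2 hs
  have hemp1 : ∀ s : ℝ, c1 < s → lev ζ w1 s = ∅ := fun s hs => lev_empty hζpos hζanti hz1 hmin1 hs
  have hemp2 : ∀ s : ℝ, c2 < s → lev ζ w2 s = ∅ := fun s hs => lev_empty hζpos hζanti hz2 hmin2 hs
  have hbd1 : ∀ s : ℝ, 0 < s → IsBounded (lev ζ w1 s) :=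
    fun s hs => lev_isBounded hζpos hζcont hζanti hmom h1 hs
  have hbd2 : ∀ s : ℝ, 0 < s → IsBounded (lev ζ w2 s) :=
    fun s hs => lev_isBounded hζpos hζcont hζanti hmom h2 hs
  set dd : ℕ → En n := denseSeq (En n) with hdd
  -- the distance functions
  set g1 : ℕ → ℝ → ℝ := fun i s => infDist (dd i) (lev ζ w1 (min s c1)) with hg1
  set g2 : ℕ → ℝ → ℝ := fun i s => infDist (dd i) (lev ζ w2 (min s c2)) with hg2
  have hg1mono : ∀ i, Monotone (g1 i) := by
    intro i s s' hss
    have hsub : lev ζ w1 (min s' c1) ⊆ lev ζ w1 (min s c1) :=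
      lev_antitone (min_le_min_right _ hss)
    exact infDist_le_infDist_of_subset hsub (hne1 _ (min_le_right _ _))
  have hg2mono : ∀ i, Monotone (g2 i) := by
    intro i s s' hss
    have hsub : lev ζ w2 (min s' c2) ⊆ lev ζ w2 (min s c2) :=
      lev_antitone (min_le_min_right _ hss)
    exact infDist_le_infDist_of_subset hsub (hne2 _ (min_le_right _ _))
  have hg1meas : ∀ i, Measurable (g1 i) := fun i => (hg1mono i).measurable
  have hg2meas : ∀ i, Measurable (g2 i) := fun i => (hg2mono i).measurable
  set e : ℕ → ℝ → ℝ := fun i s => if 0 < s then dist (dd i) 0 else 0 with he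
  have hemeas : ∀ i, Measurable (e i) := by
    intro i
    exact Measurable.ite (measurableSet_Ioi (a := (0:ℝ))) measurable_const measurable_const
  -- two facts about lev at clamped arguments, for s > 0
  have hkey1 : ∀ s : ℝ, 0 < s → (lev ζ w1 (min s c1)).Nonempty ∧ IsBounded (lev ζ w1 (min s c1)) :=
    fun s hs => ⟨hne1 _ (min_le_right _ _), hbd1 _ (lt_min hs hc1pos)⟩
  have hkey2 : ∀ s : ℝ, 0 < s → (lev ζ w2 (min s c2)).Nonempty ∧ IsBounded (lev ζ w2 (min s c2)) :=
    fun s hs => ⟨hne2 _ (min_le_right _ _), hbd2 _ (lt_min hs hc2pos)⟩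
  -- boundedness of the sup families
  have hbdd12 : ∀ s : ℝ, BddAbove (Set.range fun i => |g1 i s - g2 i s|) := by
    intro s
    rcases lt_or_ge 0 s with hs | hs
    · obtain ⟨hne, hbd⟩ := hkey1 s hs
      obtain ⟨hne', hbd'⟩ := hkey2 s hs
      exact ⟨hausdorffDist (lev ζ w1 (min s c1)) (lev ζ w2 (min s c2)),
        by rintro y ⟨i, rfl⟩; exact abs_infDist_sub_le hne hne' hbd hbd' _⟩
    · refine ⟨0, ?_⟩
      rintro y ⟨i, rfl⟩
      have e1 : lev ζ w1 (min s c1) = Set.univ := lev_univ hζpos (min_le_of_left_le hs)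
      have e2 : lev ζ w2 (min s c2) = Set.univ := lev_univ hζpos (min_le_of_left_le hs)
      simp [hg1, hg2, e1, e2, infDist_zero_of_mem (Set.mem_univ _)]
  have hbdd1e : ∀ s : ℝ, BddAbove (Set.range fun i => |g1 i s - e i s|) := by
    intro s
    rcases lt_or_ge 0 s with hs | hs
    · obtain ⟨hne, hbd⟩ := hkey1 s hs
      refine ⟨hausdorffDist (lev ζ w1 (min s c1)) {0}, ?_⟩
      rintro y ⟨i, rfl⟩
      show |g1 i s - e i s| ≤ _
      have hee : e i s = infDist (dd i) ({0} : Set (En n)) := by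
        rw [he]; simp [if_pos hs, infDist_singleton]
      rw [hee]
      exact abs_infDist_sub_le hne (Set.singleton_nonempty _) hbd isBounded_singleton _
    · refine ⟨0, ?_⟩
      rintro y ⟨i, rfl⟩
      show |g1 i s - e i s| ≤ _
      have e1 : lev ζ w1 (min s c1) = Set.univ := lev_univ hζpos (min_le_of_left_le hs)
      have he0 : e i s = 0 := by rw [he]; simp [not_lt.2 hs]
      simp [hg1, e1, he0, infDist_zero_of_mem (Set.mem_univ _)]
  have hbdd2e : ∀ s : ℝ, BddAbove (Set.range fun i => |g2 i s - e i s|) := by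
    intro s
    rcases lt_or_ge 0 s with hs | hs
    · obtain ⟨hne, hbd⟩ := hkey2 s hs
      refine ⟨hausdorffDist (lev ζ w2 (min s c2)) {0}, ?_⟩
      rintro y ⟨i, rfl⟩
      show |g2 i s - e i s| ≤ _
      have hee : e i s = infDist (dd i) ({0} : Set (En n)) := by
        rw [he]; simp [if_pos hs, infDist_singleton]
      rw [hee]
      exact abs_infDist_sub_le hne (Set.singleton_nonempty _) hbd isBounded_singleton _
    · refine ⟨0, ?_⟩
      rintro y ⟨i, rfl⟩
      show |g2 i s - e i s| ≤ _
      have e2 : lev ζ w2 (min s c2) = Set.univ := lev_univ hζpos (min_le_of_left_le hs)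
      have he0 : e i s = 0 := by rw [he]; simp [not_lt.2 hs]
      simp [hg2, e2, he0, infDist_zero_of_mem (Set.mem_univ _)]
  -- the sups
  set q12 : ℝ → ℝ := fun s => ⨆ i, |g1 i s - g2 i s| with hq12
  set q1 : ℝ → ℝ := fun s => ⨆ i, |g1 i s - e i s| with hq1
  set q2 : ℝ → ℝ := fun s => ⨆ i, |g2 i s - e i s| with hq2
  have hq12meas : Measurable q12 :=
    measurable_ciSup_nat (fun i => ((hg1meas i).sub (hg2meas i)).abs) hbdd12
  have hq1meas : Measurable q1 :=
    measurable_ciSup_nat (fun i => ((hg1meas i).sub (hemeas i)).abs) hbdd1e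
  have hq2meas : Measurable q2 :=
    measurable_ciSup_nat (fun i => ((hg2meas i).sub (hemeas i)).abs) hbdd2e
  -- the measurable model
  set G : ℝ → ℝ := fun s => if s ≤ c1 then (if s ≤ c2 then q12 s else max 1 (q1 s))
      else (if s ≤ c2 then max 1 (q2 s) else 0) with hG
  have hGmeas : Measurable G := by
    refine Measurable.ite (measurableSet_Iic (a := c1)) ?_ ?_
    · exact Measurable.ite (measurableSet_Iic (a := c2)) hq12meas (measurable_const.max hq1meas)
    · exact Measurable.ite (measurableSet_Iic (a := c2)) (measurable_const.max hq2meas)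
        measurable_const
  -- F = G on Ioi 0
  have hFG : Set.EqOn F G (Set.Ioi (0:ℝ)) := by
    intro s hs
    have hs' : (0:ℝ) < s := hs
    by_cases hsc1 : s ≤ c1 <;> by_cases hsc2 : s ≤ c2
    · have hne := hne1 s hsc1
      have hne' := hne2 s hsc2
      have hG' : G s = q12 s := by rw [hG]; simp [hsc1, hsc2]
      rw [hG']
      show dhatH (lev ζ w1 s) (lev ζ w2 s) = _
      rw [dhatH, if_neg (Set.nonempty_iff_ne_empty.1 hne),
        if_neg (Set.nonempty_iff_ne_empty.1 hne')]
      rw [hd_eq_iSup hne hne' (hbd1 s hs') (hbd2 s hs')]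
      rw [hq12]
      refine iSup_congr (fun i => ?_)
      rw [hg1, hg2]
      simp only [min_eq_left hsc1, min_eq_left hsc2]
      rfl
    · have hne := hne1 s hsc1
      have hemp := hemp2 s (not_le.1 hsc2)
      have hG' : G s = max 1 (q1 s) := by rw [hG]; simp [hsc1, hsc2]
      rw [hG']
      show dhatH (lev ζ w1 s) (lev ζ w2 s) = _
      rw [dhatH, if_neg (Set.nonempty_iff_ne_empty.1 hne), if_pos hemp]
      congr 1
      rw [hd_eq_iSup hne (Set.singleton_nonempty 0) (hbd1 s hs') isBounded_singleton]
      rw [hq1]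
      refine iSup_congr (fun i => ?_)
      rw [hg1, he]
      simp only [min_eq_left hsc1, if_pos hs', infDist_singleton]
      rfl
    · have hne' := hne2 s hsc2
      have hemp := hemp1 s (not_le.1 hsc1)
      have hG' : G s = max 1 (q2 s) := by rw [hG]; simp [hsc1, hsc2]
      rw [hG']
      show dhatH (lev ζ w1 s) (lev ζ w2 s) = _
      rw [dhatH, if_pos hemp, if_neg (Set.nonempty_iff_ne_empty.1 hne')]
      congr 1
      rw [hd_eq_iSup hne' (Set.singleton_nonempty 0) (hbd2 s hs') isBounded_singleton]
      rw [hq2]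
      refine iSup_congr (fun i => ?_)
      rw [hg2, he]
      simp only [min_eq_left hsc2, if_pos hs', infDist_singleton]
      rfl
    · have he1 := hemp1 s (not_le.1 hsc1)
      have he2 := hemp2 s (not_le.1 hsc2)
      have hG' : G s = 0 := by rw [hG]; simp [hsc1, hsc2]
      rw [hG']
      show dhatH (lev ζ w1 s) (lev ζ w2 s) = _
      rw [dhatH, if_pos he1, if_pos he2]
  -- domination
  set ψ1 : ℝ → ℝ := fun r => max 0 (TB ζ m1 (Real.exp r) - m1) with hψ1
  set ψ2 : ℝ → ℝ := fun r => max 0 (TB ζ m2 (Real.exp r) - m2) with hψ2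
  have hψanti : ∀ (m' : ℝ), Antitone (fun r => max 0 (TB ζ m' (Real.exp r) - m')) := by
    intro m' r r' hrr
    have := TB_antitoneOn hζpos hζcont hζanti hmom m' (Real.exp_pos r)
      (Real.exp_pos r') (Real.exp_le_exp.2 hrr)
    exact max_le_max le_rfl (sub_le_sub_right this _)
  have hψ1meas : Measurable ψ1 := (hψanti m1).measurable
  have hψ2meas : Measurable ψ2 := (hψanti m2).measurable
  set φ1 : ℝ → ℝ := fun s => ψ1 (Real.log s) with hφ1
  set φ2 : ℝ → ℝ := fun s => ψ2 (Real.log s) with hφ2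
  have hφ1meas : Measurable φ1 := hψ1meas.comp Real.measurable_log
  have hφ2meas : Measurable φ2 := hψ2meas.comp Real.measurable_log
  have hφ1eq : ∀ s : ℝ, 0 < s → φ1 s = max 0 (TB ζ m1 s - m1) := by
    intro s hs; rw [hφ1, hψ1]; simp only [Real.exp_log hs]
  have hφ2eq : ∀ s : ℝ, 0 < s → φ2 s = max 0 (TB ζ m2 s - m2) := by
    intro s hs; rw [hφ2, hψ2]; simp only [Real.exp_log hs]
  have hφ1nn : ∀ s, 0 ≤ φ1 s := fun s => le_max_left _ _
  have hφ2nn : ∀ s, 0 ≤ φ2 s := fun s => le_max_left _ _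
  set c : ℝ := max c1 c2 with hc
  set C0 : ℝ := 1 + ‖z1‖ + R1 + ‖z2‖ + R2 with hC0
  set Hf : ℝ → ℝ := Set.indicator (Set.Ioc 0 c)
    (fun s => C0 + R1 * φ1 s + R2 * φ2 s) with hHf
  -- radius bounds
  have hrad1 : ∀ s : ℝ, 0 < s → ∀ x ∈ lev ζ w1 s, ‖x‖ ≤ ‖z1‖ + R1 * (1 + φ1 s) := by
    intro s hs x hx
    rw [hφ1eq s hs]
    exact lev_radius hζpos hζcont hζanti hmom h1.1 hgrow1 hR1 hs hx
  have hrad2 : ∀ s : ℝ, 0 < s → ∀ x ∈ lev ζ w2 s, ‖x‖ ≤ ‖z2‖ + R2 * (1 + φ2 s) := by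
    intro s hs x hx
    rw [hφ2eq s hs]
    exact lev_radius hζpos hζcont hζanti hmom h2.1 hgrow2 hR2 hs hx
  have hR1pos : (0:ℝ) < R1 := lt_of_lt_of_le one_pos hR1
  have hR2pos : (0:ℝ) < R2 := lt_of_lt_of_le one_pos hR2
  -- F bounded by Hf on Ioi 0
  have hFbound : ∀ s : ℝ, 0 < s → F s ≤ Hf s := by
    intro s hs
    by_cases hsc : s ≤ c
    · have hHf' : Hf s = C0 + R1 * φ1 s + R2 * φ2 s :=
        Set.indicator_of_mem (show s ∈ Set.Ioc 0 c from ⟨hs, hsc⟩) _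
      rw [hHf']
      set r1s : ℝ := ‖z1‖ + R1 * (1 + φ1 s) with hr1s
      set r2s : ℝ := ‖z2‖ + R2 * (1 + φ2 s) with hr2s
      have hr1nn : 0 ≤ r1s := by
        have := hφ1nn s
        have h0 : (0:ℝ) ≤ R1 * (1 + φ1 s) := by positivity
        positivity
      have hr2nn : 0 ≤ r2s := by
        have := hφ2nn s
        positivity
      have hsum : C0 + R1 * φ1 s + R2 * φ2 s = 1 + r1s + r2s := by
        rw [hC0, hr1s, hr2s]; ring
      rw [hsum]
      by_cases h1e : lev ζ w1 s = ∅ <;> by_cases h2e : lev ζ w2 s = ∅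
      · show dhatH _ _ ≤ _
        rw [dhatH, if_pos h1e, if_pos h2e]
        linarith
      · obtain ⟨b0, hb0⟩ := Set.nonempty_iff_ne_empty.2 h2e
        show dhatH _ _ ≤ _
        rw [dhatH, if_pos h1e, if_neg h2e]
        have hhd : hausdorffDist (lev ζ w2 s) ({0} : Set (En n)) ≤ r2s := by
          refine hausdorffDist_le_of_infDist hr2nn (fun a ha => ?_) (fun b hb => ?_)
          · rw [infDist_singleton, dist_zero_right]
            exact hrad2 s hs a ha
          · rw [Set.mem_singleton_iff] at hb
            rw [hb]
            refine le_trans (infDist_le_dist_of_mem hb0) ?_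
            rw [dist_comm, dist_zero_right]
            exact hrad2 s hs b0 hb0
        have : max 1 (hausdorffDist (lev ζ w2 s) ({0} : Set (En n))) ≤ max 1 r2s :=
          max_le_max le_rfl hhd
        refine le_trans this ?_
        rcases max_cases 1 r2s with ⟨hm, -⟩ | ⟨hm, -⟩ <;> rw [hm] <;> linarith
      · obtain ⟨a0, ha0⟩ := Set.nonempty_iff_ne_empty.2 h1e
        show dhatH _ _ ≤ _
        rw [dhatH, if_neg h1e, if_pos h2e]
        have hhd : hausdorffDist (lev ζ w1 s) ({0} : Set (En n)) ≤ r1s := by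
          refine hausdorffDist_le_of_infDist hr1nn (fun a ha => ?_) (fun b hb => ?_)
          · rw [infDist_singleton, dist_zero_right]
            exact hrad1 s hs a ha
          · rw [Set.mem_singleton_iff] at hb
            rw [hb]
            refine le_trans (infDist_le_dist_of_mem ha0) ?_
            rw [dist_comm, dist_zero_right]
            exact hrad1 s hs a0 ha0
        have : max 1 (hausdorffDist (lev ζ w1 s) ({0} : Set (En n))) ≤ max 1 r1s :=
          max_le_max le_rfl hhd
        refine le_trans this ?_
        rcases max_cases 1 r1s with ⟨hm, -⟩ | ⟨hm, -⟩ <;> rw [hm] <;> linarith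
      · obtain ⟨a0, ha0⟩ := Set.nonempty_iff_ne_empty.2 h1e
        obtain ⟨b0, hb0⟩ := Set.nonempty_iff_ne_empty.2 h2e
        show dhatH _ _ ≤ _
        rw [dhatH, if_neg h1e, if_neg h2e]
        have hhd : hausdorffDist (lev ζ w1 s) (lev ζ w2 s) ≤ r1s + r2s := by
          refine hausdorffDist_le_of_infDist (by linarith) (fun a ha => ?_) (fun b hb => ?_)
          · refine le_trans (infDist_le_dist_of_mem hb0) ?_
            have : dist a b0 ≤ ‖a‖ + ‖b0‖ := by
              calc dist a b0 ≤ dist a 0 + dist 0 b0 := dist_triangle _ _ _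
                _ = ‖a‖ + ‖b0‖ := by rw [dist_zero_right, dist_comm, dist_zero_right]
            refine le_trans this ?_
            have := hrad1 s hs a ha
            have := hrad2 s hs b0 hb0
            linarith
          · refine le_trans (infDist_le_dist_of_mem ha0) ?_
            have : dist b a0 ≤ ‖b‖ + ‖a0‖ := by
              calc dist b a0 ≤ dist b 0 + dist 0 a0 := dist_triangle _ _ _
                _ = ‖b‖ + ‖a0‖ := by rw [dist_zero_right, dist_comm, dist_zero_right]
            refine le_trans this ?_
            have := hrad2 s hs b hb
            have := hrad1 s hs a0 ha0
            linarith
        linarith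
    · -- s > c : both level sets empty, F s = 0 = Hf s
      push_neg at hsc
      have he1 := hemp1 s (lt_of_le_of_lt (le_max_left _ _) hsc)
      have he2 := hemp2 s (lt_of_le_of_lt (le_max_right _ _) hsc)
      have hF0 : F s = 0 := by
        show dhatH _ _ = 0
        rw [dhatH, if_pos he1, if_pos he2]
      have hH0 : Hf s = 0 := Set.indicator_of_notMem (fun hmem => absurd hmem.2 (not_le.2 hsc)) _
      rw [hF0, hH0]
  -- Integrability of Hf
  have hφ1int : IntegrableOn φ1 (Set.Ioc (0:ℝ) c) :=
    phi_integrable hζpos hζcont hζanti hmom m1 c φ1 hφ1meas hφ1nn hφ1eq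
  have hφ2int : IntegrableOn φ2 (Set.Ioc (0:ℝ) c) :=
    phi_integrable hζpos hζcont hζanti hmom m2 c φ2 hφ2meas hφ2nn hφ2eq
  have hHint : Integrable Hf := by
    rw [hHf, integrable_indicator_iff measurableSet_Ioc]
    refine Integrable.add (Integrable.add ?_ ?_) ?_
    · exact integrableOn_const measure_Ioc_lt_top.ne
    · exact hφ1int.const_mul R1
    · exact hφ2int.const_mul R2
  -- conclude
  have hFaesm : AEStronglyMeasurable F (volume.restrict (Set.Ioi (0:ℝ))) := by
    refine hGmeas.aestronglyMeasurable.congr ?_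
    filter_upwards [ae_restrict_mem measurableSet_Ioi] with s hs
    exact (hFG hs).symm
  refine Integrable.mono' (hHint.restrict) hFaesm ?_
  filter_upwards [ae_restrict_mem measurableSet_Ioi] with s hs
  rw [Real.norm_eq_abs, abs_of_nonneg (dhatH_nonneg _ _)]
  exact hFbound s hs


end Aux7
section Aux8

open Metric Bornology MeasureTheory Filter Topology TopologicalSpace

variable {n : ℕ}

lemma setIntegral_lower {F : ℝ → ℝ} (hint : IntegrableOn F (Set.Ioi (0:ℝ)))
    (hnn : ∀ s ∈ Set.Ioi (0:ℝ), 0 ≤ F s) {a b ε : ℝ} (h0 : 0 < a) (hab : a < b)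
    (hε : 0 ≤ ε) (hbd : ∀ s ∈ Set.Ioc a b, ε ≤ F s) :
    ε * (b - a) ≤ ∫ s in Set.Ioi (0:ℝ), F s := by
  have hsub : Set.Ioc a b ⊆ Set.Ioi (0:ℝ) := fun x hx => lt_trans h0 hx.1
  have hIocInt : IntegrableOn F (Set.Ioc a b) := hint.mono_set hsub
  have h1 : ∫ s in Set.Ioc a b, ε ≤ ∫ s in Set.Ioc a b, F s := by
    refine setIntegral_mono_on (integrableOn_const measure_Ioc_lt_top.ne)
      hIocInt measurableSet_Ioc hbd
  have h2 : ∫ s in Set.Ioc a b, (ε:ℝ) = (b - a) * ε := by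
    rw [setIntegral_const, measureReal_def, Real.volume_Ioc, ENNReal.toReal_ofReal (by linarith), smul_eq_mul]
  have h3 : ∫ s in Set.Ioc a b, F s ≤ ∫ s in Set.Ioi (0:ℝ), F s := by
    refine setIntegral_mono_set hint ?_ (HasSubset.Subset.eventuallyLE hsub)
    filter_upwards [ae_restrict_mem measurableSet_Ioi] with s hs
    exact hnn s hs
  calc ε * (b - a) = (b - a) * ε := by ring
    _ = ∫ s in Set.Ioc a b, (ε:ℝ) := h2.symm
    _ ≤ ∫ s in Set.Ioc a b, F s := h1
    _ ≤ _ := h3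

/-- Main estimate: if a point of a sublevel set of `w1` is `ε`-far from the
`t`-sublevel set of `w2`, then the integral is at least `ε (ζ t' - ζ t)`. -/
lemma main_estimate {ζ : ℝ → ℝ} (hζpos : ∀ t, 0 < ζ t) (hζcont : Continuous ζ)
    (hζanti : StrictAnti ζ) (hmom : IntegrableOn ζ (Set.Ioi (0:ℝ)))
    {w1 w2 : En n → EReal} (h1 : ConvC n w1) (h2 : ConvC n w2)
    {t' t ε : ℝ} (htt : t' < t) (hε : 0 < ε) (hε1 : ε ≤ 1) {x₀ : En n}
    (hx0 : w1 x₀ ≤ (t' : EReal)) (hfar : ∀ y : En n, w2 y ≤ (t : EReal) → ε < dist x₀ y) :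
    ε * (ζ t' - ζ t) ≤ ∫ s in Set.Ioi (0:ℝ), dhatH (lev ζ w1 s) (lev ζ w2 s) := by
  refine setIntegral_lower (integrable_dhatH hζpos hζcont hζanti hmom h1 h2)
    (fun s _ => dhatH_nonneg _ _) (hζpos t) (hζanti htt) hε.le ?_
  intro s hs
  have hs0 : (0:ℝ) < s := lt_trans (hζpos t) hs.1
  have hx0mem : x₀ ∈ lev ζ w1 s := mem_lev_of_le hζanti h1.1 hx0 hs.2
  have hlevsub : lev ζ w2 s ⊆ {x | w2 x ≤ (t : EReal)} :=
    lev_subset_sublevel hζanti hs0 hs.1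
  have hne1 : (lev ζ w1 s).Nonempty := ⟨x₀, hx0mem⟩
  by_cases h2e : lev ζ w2 s = ∅
  · rw [dhatH, if_neg (Set.nonempty_iff_ne_empty.1 hne1), if_pos h2e]
    exact le_trans hε1 (le_max_left _ _)
  · rw [dhatH, if_neg (Set.nonempty_iff_ne_empty.1 hne1), if_neg h2e]
    have hne2 : (lev ζ w2 s).Nonempty := Set.nonempty_iff_ne_empty.2 h2e
    have hed : EMetric.hausdorffEdist (lev ζ w1 s) (lev ζ w2 s) ≠ ⊤ :=
      hausdorffEdist_ne_top_of_nonempty_of_bounded hne1 hne2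
        (lev_isBounded hζpos hζcont hζanti hmom h1 hs0)
        (lev_isBounded hζpos hζcont hζanti hmom h2 hs0)
    refine le_trans ?_ (infDist_le_hausdorffDist_of_mem hx0mem hed)
    by_contra hlt
    push_neg at hlt
    obtain ⟨y, hy, hdy⟩ := (infDist_lt_iff hne2).1 hlt
    exact absurd hdy (not_lt.2 (hfar y (hlevsub hy)).le)

end Aux8
theorem statement18 (n : ℕ) (hn : 1 ≤ n)
    (ζ : ℝ → ℝ) (hζpos : ∀ t, 0 < ζ t) (hζcont : Continuous ζ) (hζanti : StrictAnti ζ)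
    (hmom : IntegrableOn ζ (Set.Ioi (0:ℝ)))
    (u : ℕ → En n → EReal) (v : En n → EReal)
    (hu : ∀ k, ConvC n (u k)) (hv : ConvC n v)
    (hconv : Tendsto (fun k => deltaH ζ (u k) v) atTop (𝓝 0)) :
    EpiTendsto u v ∧
      Tendsto (fun k => ⨅ x : En n, u k x) atTop (𝓝 (⨅ x : En n, v x)) := by
  classical
  obtain ⟨zv, mv, hzv, hminv⟩ := convC_min hv
  have hmk := fun k => convC_min (hu k)
  choose zu mu hzu hminu using hmk
  have hdelta_eq : ∀ k, ∫ s in Set.Ioi (0:ℝ), dhatH (lev ζ (u k) s) (lev ζ v s)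
      = deltaH ζ (u k) v := fun k => rfl
  have hdelta_eq' : ∀ k, ∫ s in Set.Ioi (0:ℝ), dhatH (lev ζ v s) (lev ζ (u k) s)
      = deltaH ζ (u k) v := by
    intro k
    rw [← hdelta_eq k]
    congr 1
    funext s
    exact dhatH_comm _ _
  -- ############ closeness lemmas ############
  have hL4a : ∀ t' t ε : ℝ, t' < t → 0 < ε → ε ≤ 1 →
      ∀ᶠ k in atTop, ∀ x₀ : En n, u k x₀ ≤ (t' : EReal) →
        ∃ y, v y ≤ (t : EReal) ∧ dist x₀ y ≤ ε := by
    intro t' t ε htt hε hε1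
    have hpos : 0 < ε * (ζ t' - ζ t) := mul_pos hε (sub_pos.2 (hζanti htt))
    filter_upwards [hconv.eventually_lt_const hpos] with k hk
    intro x₀ hx₀
    by_contra hcon
    push_neg at hcon
    have hme := main_estimate hζpos hζcont hζanti hmom (hu k) hv htt hε hε1 hx₀ hcon
    rw [hdelta_eq k] at hme
    exact absurd (lt_of_le_of_lt hme hk) (lt_irrefl _)
  have hL4b : ∀ t' t ε : ℝ, t' < t → 0 < ε → ε ≤ 1 →
      ∀ᶠ k in atTop, ∀ x₀ : En n, v x₀ ≤ (t' : EReal) →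
        ∃ y, u k y ≤ (t : EReal) ∧ dist x₀ y ≤ ε := by
    intro t' t ε htt hε hε1
    have hpos : 0 < ε * (ζ t' - ζ t) := mul_pos hε (sub_pos.2 (hζanti htt))
    filter_upwards [hconv.eventually_lt_const hpos] with k hk
    intro x₀ hx₀
    by_contra hcon
    push_neg at hcon
    have hme := main_estimate hζpos hζcont hζanti hmom hv (hu k) htt hε hε1 hx₀ hcon
    rw [hdelta_eq' k] at hme
    exact absurd (lt_of_le_of_lt hme hk) (lt_irrefl _)
  constructor
  · -- ############ epi-convergence ############
    intro x
    constructor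
    · -- liminf part
      intro y hy
      by_contra hL
      push_neg at hL
      obtain ⟨a, ha1, ha2⟩ := EReal.lt_iff_exists_real_btwn.1 hL
      obtain ⟨b, hb1, hb2⟩ := EReal.lt_iff_exists_real_btwn.1 ha2
      have hab : a < b := EReal.coe_lt_coe_iff.1 hb1
      have hfreq : ∃ᶠ k in atTop, u k (y k) < (a : EReal) := by
        by_contra hnf
        rw [not_frequently] at hnf
        have hge : ∀ᶠ k in atTop, (a : EReal) ≤ u k (y k) :=
          hnf.mono (fun k hk => not_lt.1 hk)
        have := le_liminf_of_le (by isBoundedDefault) hge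
        exact absurd (lt_of_le_of_lt this ha1) (lt_irrefl _)
      have hzj : ∀ j : ℕ, ∃ z, v z ≤ (b : EReal) ∧ dist x z ≤ 2/((j:ℝ)+1) := by
        intro j
        have hεpos : (0:ℝ) < 1/((j:ℝ)+1) := by positivity
        have hε1 : (1:ℝ)/((j:ℝ)+1) ≤ 1 := by
          rw [div_le_one (by positivity)]
          simp
        have hev := hL4a a b (1/((j:ℝ)+1)) hab hεpos hε1
        have hevy : ∀ᶠ k in atTop, dist (y k) x ≤ 1/((j:ℝ)+1) := by
          have := hy (Metric.closedBall_mem_nhds x hεpos)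
          filter_upwards [this] with k hk
          exact hk
        obtain ⟨k, hk1, hk2, hk3⟩ := (hfreq.and_eventually (hev.and hevy)).exists
        obtain ⟨z, hz1, hz2⟩ := hk2 (y k) hk1.le
        refine ⟨z, hz1, ?_⟩
        calc dist x z ≤ dist x (y k) + dist (y k) z := dist_triangle _ _ _
          _ ≤ 1/((j:ℝ)+1) + 1/((j:ℝ)+1) := by
              rw [dist_comm x (y k)]; exact add_le_add hk3 hz2
          _ = 2/((j:ℝ)+1) := by ring
      choose zs hzs1 hzs2 using hzj
      have hztend : Tendsto zs atTop (𝓝 x) := by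
        rw [tendsto_iff_dist_tendsto_zero]
        have hb : ∀ j : ℕ, dist (zs j) x ≤ 2/((j:ℝ)+1) := fun j => by
          rw [dist_comm]; exact hzs2 j
        refine squeeze_zero (fun j => dist_nonneg) hb ?_
        have h2 : Tendsto (fun j : ℕ => 2 * (1/((j:ℝ)+1))) atTop (𝓝 (2 * 0)) :=
          tendsto_one_div_add_atTop_nhds_zero_nat.const_mul 2
        simpa [mul_one_div, div_eq_mul_inv] using h2
      have hclosed : IsClosed {x : En n | v x ≤ ((b:ℝ) : EReal)} := sublevel_closed hv.2.2.1 _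
      have hxmem := hclosed.mem_of_tendsto hztend (Filter.Eventually.of_forall hzs1)
      exact absurd (lt_of_le_of_lt hxmem hb2) (lt_irrefl _)
    · -- recovery sequence
      by_cases hvx : v x = ⊤
      · exact ⟨fun _ => x, tendsto_const_nhds, by rw [hvx]; exact le_top⟩
      · set r : ℝ := (v x).toReal with hr
        have hvxr : v x = (r : EReal) := (EReal.coe_toReal hvx (hv.1 x)).symm
        set P : ℕ → ℕ → Prop := fun j k => ∃ y : En n,
          u k y ≤ ((r + 1/((j:ℝ)+1) : ℝ) : EReal) ∧ dist x y ≤ 1/((j:ℝ)+1) with hP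
        have hPj : ∀ j, ∀ᶠ k in atTop, P j k := by
          intro j
          have hεpos : (0:ℝ) < 1/((j:ℝ)+1) := by positivity
          have hε1 : (1:ℝ)/((j:ℝ)+1) ≤ 1 := by
            rw [div_le_one (by positivity)]; simp
          have := hL4b r (r + 1/((j:ℝ)+1)) (1/((j:ℝ)+1)) (by linarith) hεpos hε1
          filter_upwards [this] with k hk
          exact hk x (le_of_eq hvxr)
        have hNj : ∀ j, ∃ N, ∀ k ≥ N, P j k := fun j => eventually_atTop.1 (hPj j)
        choose N hN using hNj
        set M : ℕ → ℕ := fun j => (Finset.range (j+1)).sup N + j with hM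
        have hMN : ∀ j, N j ≤ M j := by
          intro j
          refine le_trans (Finset.le_sup (Finset.self_mem_range_succ j)) (Nat.le_add_right _ _)
        have hMj : ∀ j, j ≤ M j := fun j => Nat.le_add_left _ _
        have hMP : ∀ j k, M j ≤ k → P j k := fun j k hk => hN j k (le_trans (hMN j) hk)
        set jj : ℕ → ℕ := fun k => Nat.findGreatest (fun j => M j ≤ k) k with hjj
        have hjjP : ∀ k, M 0 ≤ k → P (jj k) k := by
          intro k hk
          refine hMP _ _ ?_
          exact Nat.findGreatest_spec (P := fun j => M j ≤ k) (Nat.zero_le k) hk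
        have hjjge : ∀ j k, M j ≤ k → j ≤ jj k :=
          fun j k hk => Nat.le_findGreatest (le_trans (hMj j) hk) hk
        set y : ℕ → En n := fun k => if h : M 0 ≤ k then (hjjP k h).choose else x with hy
        have hyspec : ∀ k, M 0 ≤ k →
            u k (y k) ≤ ((r + 1/((jj k : ℝ)+1) : ℝ) : EReal) ∧ dist x (y k) ≤ 1/((jj k : ℝ)+1) := by
          intro k hk
          rw [hy]
          simp only [dif_pos hk]
          exact (hjjP k hk).choose_spec
        refine ⟨y, ?_, ?_⟩
        · -- y → x
          rw [Metric.tendsto_atTop]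
          intro ε hε
          obtain ⟨j, hj⟩ := exists_nat_one_div_lt hε
          refine ⟨max (M j) (M 0), fun k hk => ?_⟩
          have hk1 : M j ≤ k := le_trans (le_max_left _ _) hk
          have hk0 : M 0 ≤ k := le_trans (le_max_right _ _) hk
          have hjjk : j ≤ jj k := hjjge j k hk1
          have hd := (hyspec k hk0).2
          have : 1/((jj k : ℝ)+1) ≤ 1/((j:ℝ)+1) := by
            apply one_div_le_one_div_of_le (by positivity)
            exact_mod_cast Nat.succ_le_succ hjjk
          rw [dist_comm]
          exact lt_of_le_of_lt (le_trans hd this) hj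
        · -- limsup bound
          have hls : ∀ j : ℕ, limsup (fun k => u k (y k)) atTop ≤
              ((r + 1/((j:ℝ)+1) : ℝ) : EReal) := by
            intro j
            refine limsup_le_of_le (by isBoundedDefault) ?_
            filter_upwards [eventually_ge_atTop (max (M j) (M 0))] with k hk
            have hk1 : M j ≤ k := le_trans (le_max_left _ _) hk
            have hk0 : M 0 ≤ k := le_trans (le_max_right _ _) hk
            have hjjk : j ≤ jj k := hjjge j k hk1
            have hub := (hyspec k hk0).1
            refine le_trans hub ?_
            rw [EReal.coe_le_coe_iff]
            have : 1/((jj k : ℝ)+1) ≤ 1/((j:ℝ)+1) := by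
              apply one_div_le_one_div_of_le (by positivity)
              exact_mod_cast Nat.succ_le_succ hjjk
            linarith
          have htendr : Tendsto (fun j : ℕ => ((r + 1/((j:ℝ)+1) : ℝ) : EReal)) atTop
              (𝓝 ((r : ℝ) : EReal)) := by
            rw [EReal.tendsto_coe]
            have := tendsto_one_div_add_atTop_nhds_zero_nat (𝕜 := ℝ)
            simpa using tendsto_const_nhds.add this
          rw [hvxr]
          exact ge_of_tendsto htendr (Filter.Eventually.of_forall hls)
  · -- ############ min convergence ############
    have hstep1 : ∀ k, |ζ (mu k) - ζ mv| ≤ deltaH ζ (u k) v := by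
      intro k
      have hint := integrable_dhatH hζpos hζcont hζanti hmom (hu k) hv
      rcases lt_trichotomy (mu k) mv with hlt | heq | hgt
      · have hζlt : ζ mv < ζ (mu k) := hζanti hlt
        have habs : |ζ (mu k) - ζ mv| = ζ (mu k) - ζ mv := abs_of_pos (by linarith)
        rw [habs, ← hdelta_eq k]
        have := setIntegral_lower hint (fun s _ => dhatH_nonneg _ _) (hζpos mv) hζlt
          zero_le_one (ε := 1) ?_
        · simpa using this
        · intro s hs
          have hemp : lev ζ v s = ∅ := lev_empty hζpos hζanti hzv hminv hs.1
          have hne : (lev ζ (u k) s).Nonempty := lev_nonempty hζanti (hu k).1 (hzu k) hs.2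
          rw [dhatH, if_neg (Set.nonempty_iff_ne_empty.1 hne), if_pos hemp]
          exact le_max_left _ _
      · rw [heq]
        simp only [sub_self, abs_zero]
        rw [← hdelta_eq k]
        exact setIntegral_nonneg measurableSet_Ioi (fun s _ => dhatH_nonneg _ _)
      · have hζlt : ζ (mu k) < ζ mv := hζanti hgt
        have habs : |ζ (mu k) - ζ mv| = ζ mv - ζ (mu k) := by
          rw [abs_sub_comm]; exact abs_of_pos (by linarith)
        rw [habs, ← hdelta_eq k]
        have := setIntegral_lower hint (fun s _ => dhatH_nonneg _ _) (hζpos (mu k)) hζlt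
          zero_le_one (ε := 1) ?_
        · simpa using this
        · intro s hs
          have hemp : lev ζ (u k) s = ∅ := lev_empty hζpos hζanti (hzu k) (hminu k) hs.1
          have hne : (lev ζ v s).Nonempty := lev_nonempty hζanti hv.1 hzv hs.2
          rw [dhatH, if_pos hemp, if_neg (Set.nonempty_iff_ne_empty.1 hne)]
          exact le_max_left _ _
    have hstep2 : Tendsto (fun k => ζ (mu k)) atTop (𝓝 (ζ mv)) := by
      rw [tendsto_iff_dist_tendsto_zero]
      refine squeeze_zero (fun k => dist_nonneg) (fun k => ?_) hconv
      rw [Real.dist_eq]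
      exact hstep1 k
    have hstep3 : Tendsto (fun k => mu k) atTop (𝓝 mv) := by
      rw [Metric.tendsto_nhds]
      intro ε hε
      have hlo : ζ (mv + ε) < ζ mv := hζanti (by linarith)
      have hhi : ζ mv < ζ (mv - ε) := hζanti (by linarith)
      have hmem : Set.Ioo (ζ (mv + ε)) (ζ (mv - ε)) ∈ 𝓝 (ζ mv) :=
        Ioo_mem_nhds hlo hhi
      filter_upwards [hstep2.eventually hmem] with k hk
      obtain ⟨hk1, hk2⟩ := hk
      have h1 : mu k < mv + ε := hζanti.lt_iff_gt.1 hk1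
      have h2 : mv - ε < mu k := hζanti.lt_iff_gt.1 hk2
      rw [Real.dist_eq, abs_lt]
      constructor <;> linarith
    have hiInfu : ∀ k, (⨅ x : En n, u k x) = ((mu k : ℝ) : EReal) := by
      intro k
      refine le_antisymm (iInf_le_of_le (zu k) (le_of_eq (hzu k))) ?_
      refine le_iInf (fun y => ?_)
      rw [← hzu k]
      exact hminu k y
    have hiInfv : (⨅ x : En n, v x) = ((mv : ℝ) : EReal) := by
      refine le_antisymm (iInf_le_of_le zv (le_of_eq hzv)) ?_
      refine le_iInf (fun y => ?_)
      rw [← hzv]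
      exact hminv y
    rw [hiInfv]
    have : (fun k => ⨅ x : En n, u k x) = fun k => ((mu k : ℝ) : EReal) := funext hiInfu
    rw [this]
    exact EReal.tendsto_coe.2 hstep3
end
end
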